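/- arXiv:1005.4084 — 8 statements merged into one kernel-verified Lean document; each statement's English description precedes it below -/
import Mathlib

section
/- Let (Y,d) be a complete p-uniformly convex geodesic metric space with constant c>0, and let σ be a finitely supported probability measure on Y. Then there is a unique point c_p(σ) ∈ Y minimizing the function y ↦ (∫ d(u,y)^p dσ(u))^{1/p}. Moreover, any two points y,z whose value of ∫ d(u,·)^p dσ(u) exceeds the infimum d^p by at most ε satisfy (c/4)·d(y,z)^p ≤ ε. -/
open Set

/-- A geodesic segment from `y` to `z`, parametrized proportionally to arc length on `[0,1]`. -/
def IsGeodesicSeg {Y : Type*} [MetricSpace Y] (γ : ℝ → Y) (y z : Y) : Prop :=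
  γ 0 = y ∧ γ 1 = z ∧
    ∀ s ∈ Icc (0:ℝ) 1, ∀ t ∈ Icc (0:ℝ) 1, dist (γ s) (γ t) = |s - t| * dist y z

/-- A geodesic metric space: every two points are joined by a geodesic segment. -/
def GeodesicSpace (Y : Type*) [MetricSpace Y] : Prop :=
  ∀ y z : Y, ∃ γ : ℝ → Y, IsGeodesicSeg γ y z

/-- The `p`-uniform convexity inequality with constant `c`. -/
def PUnifConvex (Y : Type*) [MetricSpace Y] (p c : ℝ) : Prop :=
  ∀ (x y z : Y) (γ : ℝ → Y), IsGeodesicSeg γ y z → ∀ t ∈ Icc (0:ℝ) 1,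
    dist x (γ t) ^ p ≤
      (1 - t) * dist x y ^ p + t * dist x z ^ p - c * t * (1 - t) * dist y z ^ p

/-- Existence and uniqueness of the geometric `p`-center of mass of a finitely supported
probability measure on a complete `p`-uniformly convex geodesic metric space, together with
the quantitative statement: any two `ε`-almost-minimizers `y, z` of the `p`-moment satisfy
`(c/4) · d(y,z)^p ≤ ε`. -/
theorem stmt2 {Y : Type*} [MetricSpace Y] [CompleteSpace Y] (p c : ℝ) (hp : 2 ≤ p)
    (hc : 0 < c) (hgeo : GeodesicSpace Y) (hconv : PUnifConvex Y p c)
    {n : ℕ} (u : Fin n → Y) (w : Fin n → ℝ) (hw : ∀ i, 0 ≤ w i) (hw1 : ∑ i, w i = 1) :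
    (∃! m : Y, ∀ y : Y, ∑ i, w i * dist (u i) m ^ p ≤ ∑ i, w i * dist (u i) y ^ p) ∧
    (∀ ε : ℝ, 0 ≤ ε → ∀ y z : Y,
      (∑ i, w i * dist (u i) y ^ p ≤
        sInf (Set.range fun y' : Y => ∑ i, w i * dist (u i) y' ^ p) + ε) →
      (∑ i, w i * dist (u i) z ^ p ≤
        sInf (Set.range fun y' : Y => ∑ i, w i * dist (u i) y' ^ p) + ε) →
      (c / 4) * dist y z ^ p ≤ ε) := by
  have hp0 : (0:ℝ) < p := by linarith
  set F : Y → ℝ := fun y => ∑ i, w i * dist (u i) y ^ p with hFdef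
  have hn : n ≠ 0 := by rintro rfl; simp at hw1
  have hY : Nonempty Y := ⟨u ⟨0, Nat.pos_of_ne_zero hn⟩⟩
  have hFnonneg : ∀ y, 0 ≤ F y := fun y =>
    Finset.sum_nonneg fun i _ => mul_nonneg (hw i) (Real.rpow_nonneg dist_nonneg p)
  have hbdd : BddBelow (Set.range F) := ⟨0, by rintro x ⟨y, rfl⟩; exact hFnonneg y⟩
  have hne : (Set.range F).Nonempty := Set.range_nonempty F
  set d : ℝ := sInf (Set.range F) with hddef
  have hdle : ∀ y, d ≤ F y := fun y => csInf_le hbdd ⟨y, rfl⟩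
  -- midpoint inequality
  have hmid : ∀ y z : Y, ∃ m : Y, F m ≤ (F y + F z) / 2 - c / 4 * dist y z ^ p := by
    intro y z
    obtain ⟨γ, hγ⟩ := hgeo y z
    refine ⟨γ (1/2), ?_⟩
    have key : ∀ i : Fin n, dist (u i) (γ (1/2)) ^ p ≤
        (1 - 1/2) * dist (u i) y ^ p + (1/2) * dist (u i) z ^ p
          - c * (1/2) * (1 - 1/2) * dist y z ^ p := fun i =>
      hconv (u i) y z γ hγ (1/2) ⟨by norm_num, by norm_num⟩
    calc F (γ (1/2))
        ≤ ∑ i, w i * ((1 - 1/2) * dist (u i) y ^ p + (1/2) * dist (u i) z ^ p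
            - c * (1/2) * (1 - 1/2) * dist y z ^ p) :=
          Finset.sum_le_sum fun i _ => mul_le_mul_of_nonneg_left (key i) (hw i)
      _ = ∑ i, ((1/2) * (w i * dist (u i) y ^ p) + (1/2) * (w i * dist (u i) z ^ p)
            - (c / 4 * dist y z ^ p) * w i) := Finset.sum_congr rfl fun i _ => by ring
      _ = (1/2) * F y + (1/2) * F z - (c / 4 * dist y z ^ p) * (∑ i, w i) := by
          rw [Finset.sum_sub_distrib, Finset.sum_add_distrib, ← Finset.mul_sum,
            ← Finset.mul_sum, ← Finset.mul_sum]
      _ = (F y + F z) / 2 - c / 4 * dist y z ^ p := by rw [hw1]; ring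
  -- quantitative statement
  have hquant : ∀ ε : ℝ, 0 ≤ ε → ∀ y z : Y, F y ≤ d + ε → F z ≤ d + ε →
      c / 4 * dist y z ^ p ≤ ε := by
    intro ε hε y z hy hz
    obtain ⟨m, hm⟩ := hmid y z
    have := hdle m
    linarith
  -- minimizing sequence
  have hseq : ∀ k : ℕ, ∃ y : Y, F y < d + 1 / (k + 1) := by
    intro k
    have hlt : d < d + 1 / (k + 1) := by
      have : (0:ℝ) < 1 / (k + 1) := by positivity
      linarith
    obtain ⟨x, ⟨y, rfl⟩, hx⟩ := exists_lt_of_csInf_lt hne hlt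
    exact ⟨y, hx⟩
  choose y hy using hseq
  have hdist : ∀ N k l : ℕ, N ≤ k → N ≤ l →
      dist (y k) (y l) ≤ (4 / c * (1 / (N + 1))) ^ (1 / p) := by
    intro N k l hk hl
    have hNk : (1:ℝ) / (k + 1) ≤ 1 / (N + 1) := by
      apply one_div_le_one_div_of_le (by positivity)
      have : (k:ℝ) + 1 ≥ (N:ℝ) + 1 := by exact_mod_cast Nat.succ_le_succ hk
      linarith
    have hNl : (1:ℝ) / (l + 1) ≤ 1 / (N + 1) := by
      apply one_div_le_one_div_of_le (by positivity)
      have : (l:ℝ) + 1 ≥ (N:ℝ) + 1 := by exact_mod_cast Nat.succ_le_succ hl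
      linarith
    have hq := hquant (1 / (N + 1)) (by positivity) (y k) (y l)
      (le_trans (hy k).le (by linarith)) (le_trans (hy l).le (by linarith))
    have hdp : dist (y k) (y l) ^ p ≤ 4 / c * (1 / (N + 1)) := by
      rw [div_mul_eq_mul_div, le_div_iff₀ hc]
      nlinarith
    calc dist (y k) (y l) = (dist (y k) (y l) ^ p) ^ (1 / p) := by
          rw [one_div, Real.rpow_rpow_inv dist_nonneg hp0.ne']
      _ ≤ (4 / c * (1 / (N + 1))) ^ (1 / p) :=
          Real.rpow_le_rpow (Real.rpow_nonneg dist_nonneg p) hdp (by positivity)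
  have hb0 : Filter.Tendsto (fun N : ℕ => (4 / c * (1 / (N + 1))) ^ (1 / p))
      Filter.atTop (nhds 0) := by
    have h1 : Filter.Tendsto (fun N : ℕ => 4 / c * (1 / ((N:ℝ) + 1))) Filter.atTop (nhds 0) := by
      simpa using tendsto_one_div_add_atTop_nhds_zero_nat.const_mul (4 / c)
    have h2 := h1.rpow_const (p := 1 / p) (Or.inr (by positivity))
    simpa [Real.zero_rpow (inv_ne_zero hp0.ne')] using h2
  have hcauchy : CauchySeq y :=
    cauchySeq_of_le_tendsto_0 _ (fun k l N hk hl => hdist N k l hk hl) hb0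
  obtain ⟨m, hm⟩ := cauchySeq_tendsto_of_complete hcauchy
  have hFcont : Continuous F := by
    apply continuous_finset_sum
    intro i _
    exact continuous_const.mul ((continuous_const.dist continuous_id).rpow_const
      (fun x => Or.inr hp0.le))
  have hFtend : Filter.Tendsto (fun k => F (y k)) Filter.atTop (nhds (F m)) :=
    (hFcont.tendsto m).comp hm
  have hdtend : Filter.Tendsto (fun k : ℕ => d + 1 / ((k:ℝ) + 1)) Filter.atTop (nhds d) := by
    simpa using (tendsto_const_nhds : Filter.Tendsto (fun _ : ℕ => d) Filter.atTop (nhds d)).add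
      tendsto_one_div_add_atTop_nhds_zero_nat
  have hFmd : F m ≤ d :=
    le_of_tendsto_of_tendsto' hFtend hdtend fun k => (hy k).le
  have hmin : ∀ y', F m ≤ F y' := fun y' => le_trans hFmd (hdle y')
  have huniq : ∀ m' : Y, (∀ y', F m' ≤ F y') → m' = m := by
    intro m' hm'
    have h1 : F m' ≤ d := le_csInf hne (by rintro x ⟨y', rfl⟩; exact hm' y')
    have hq := hquant 0 le_rfl m' m (by linarith) (by linarith)
    have hdp0 : dist m' m ^ p = 0 :=
      le_antisymm (by nlinarith) (Real.rpow_nonneg dist_nonneg p)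
    have : dist m' m = 0 := by
      by_contra h
      exact h ((Real.rpow_eq_zero dist_nonneg hp0.ne').mp hdp0)
    exact dist_eq_zero.mp this
  exact ⟨⟨m, hmin, huniq⟩, hquant⟩
end

section
/- Let (Y,d) be a complete p-uniformly convex geodesic metric space with constant c, σ a finitely supported probability measure on Y, and c_p(σ) its p-center of mass. Then for every y ∈ Y: ∫ d(u,y)^p dσ(u) ≥ ∫ d(u,c_p(σ))^p dσ(u) + c·d(c_p(σ),y)^p. -/
open Set

/-- The growth inequality for the `p`-center of mass: for every `y`,
`∫ d(u,y)^p dσ ≥ ∫ d(u, c_p(σ))^p dσ + c · d(c_p(σ), y)^p`. -/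
theorem stmt3 {Y : Type*} [MetricSpace Y] [CompleteSpace Y] (p c : ℝ) (hp : 2 ≤ p)
    (hc : 0 < c) (hgeo : GeodesicSpace Y) (hconv : PUnifConvex Y p c)
    {n : ℕ} (u : Fin n → Y) (w : Fin n → ℝ) (hw : ∀ i, 0 ≤ w i) (hw1 : ∑ i, w i = 1)
    (m : Y) (hm : ∀ y : Y, ∑ i, w i * dist (u i) m ^ p ≤ ∑ i, w i * dist (u i) y ^ p) :
    ∀ y : Y, ∑ i, w i * dist (u i) m ^ p + c * dist m y ^ p ≤ ∑ i, w i * dist (u i) y ^ p := by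
  intro y
  obtain ⟨γ, hγ⟩ := hgeo m y
  set Fm := ∑ i, w i * dist (u i) m ^ p with hFm
  set Fy := ∑ i, w i * dist (u i) y ^ p with hFy
  have key : ∀ t ∈ Ioc (0:ℝ) 1, c * (1 - t) * dist m y ^ p ≤ Fy - Fm := by
    intro t ht
    have ht' : t ∈ Icc (0:ℝ) 1 := ⟨le_of_lt ht.1, ht.2⟩
    have h1 : Fm ≤ ∑ i, w i * dist (u i) (γ t) ^ p := hm _
    have h2 : ∑ i, w i * dist (u i) (γ t) ^ p ≤
        (1 - t) * Fm + t * Fy - c * t * (1 - t) * dist m y ^ p := by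
      have hs : ∀ i ∈ Finset.univ, w i * dist (u i) (γ t) ^ p ≤
          w i * ((1 - t) * dist (u i) m ^ p + t * dist (u i) y ^ p
            - c * t * (1 - t) * dist m y ^ p) := fun i _ =>
        mul_le_mul_of_nonneg_left (hconv (u i) m y γ hγ t ht') (hw i)
      calc ∑ i, w i * dist (u i) (γ t) ^ p ≤
          ∑ i, w i * ((1 - t) * dist (u i) m ^ p + t * dist (u i) y ^ p
            - c * t * (1 - t) * dist m y ^ p) := Finset.sum_le_sum hs
        _ = (1 - t) * Fm + t * Fy - c * t * (1 - t) * dist m y ^ p * ∑ i, w i := by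
          have he : ∀ i : Fin n, w i * ((1 - t) * dist (u i) m ^ p + t * dist (u i) y ^ p
              - c * t * (1 - t) * dist m y ^ p) =
              (1 - t) * (w i * dist (u i) m ^ p) + t * (w i * dist (u i) y ^ p)
                - c * t * (1 - t) * dist m y ^ p * w i := fun i => by ring
          simp_rw [he]
          rw [Finset.sum_sub_distrib, Finset.sum_add_distrib, ← Finset.mul_sum,
            ← Finset.mul_sum, ← Finset.mul_sum]
        _ = (1 - t) * Fm + t * Fy - c * t * (1 - t) * dist m y ^ p := by
          rw [hw1, mul_one]
    have h3 : Fm ≤ (1 - t) * Fm + t * Fy - c * t * (1 - t) * dist m y ^ p := h1.trans h2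
    have h4 : t * (c * (1 - t) * dist m y ^ p) ≤ t * (Fy - Fm) := by nlinarith
    exact le_of_mul_le_mul_left h4 ht.1
  have hlim : Filter.Tendsto (fun t : ℝ => c * (1 - t) * dist m y ^ p)
      (nhdsWithin 0 (Ioi 0)) (nhds (c * dist m y ^ p)) := by
    have : Filter.Tendsto (fun t : ℝ => c * (1 - t) * dist m y ^ p)
        (nhds 0) (nhds (c * (1 - 0) * dist m y ^ p)) := by
      apply Filter.Tendsto.mul_const
      exact (tendsto_const_nhds.mul ((tendsto_const_nhds.sub Filter.tendsto_id)))
    simpa using this.mono_left nhdsWithin_le_nhds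
  have hev : ∀ᶠ t in nhdsWithin (0:ℝ) (Ioi 0),
      (fun t : ℝ => c * (1 - t) * dist m y ^ p) t ≤ Fy - Fm := by
    filter_upwards [Ioc_mem_nhdsGT_of_mem (by norm_num : (0:ℝ) ∈ Ico (0:ℝ) 1)] with t ht
    exact key t ht
  have : c * dist m y ^ p ≤ Fy - Fm := le_of_tendsto hlim hev
  linarith
end

section
/- Let (Y,d) be a uniformly convex complete geodesic metric space, and let Γ be a group acting on Y by isometries. If some Γ-orbit in Y is bounded, then Γ has a common fixed point in Y. -/
open Set

/-- Bruhat's lemma: if a group acts by isometries on a uniformly convex complete geodesic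
metric space and some orbit is bounded, then there is a common fixed point. -/
theorem stmt4 {Y : Type*} [MetricSpace Y] [CompleteSpace Y]
    (hgeo : GeodesicSpace Y)
    (hconv : ∃ p c : ℝ, 2 ≤ p ∧ 0 < c ∧ PUnifConvex Y p c)
    {G : Type*} [Group G] [MulAction G Y]
    (hiso : ∀ g : G, Isometry fun y : Y => g • y)
    (hbdd : ∃ y : Y, Bornology.IsBounded (MulAction.orbit G y)) :
    ∃ y : Y, ∀ g : G, g • y = y := by
  obtain ⟨p, c, hp2, hc, hPC⟩ := hconv
  obtain ⟨y0, hAbdd⟩ := hbdd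
  set A : Set Y := MulAction.orbit G y0 with hA
  have hy0A : y0 ∈ A := MulAction.mem_orbit_self y0
  have hp0 : (0:ℝ) < p := lt_of_lt_of_le two_pos hp2
  -- the radius function
  set r : Y → ℝ := fun x => sSup ((dist x) '' A) with hrdef
  obtain ⟨R, hR⟩ := (Metric.isBounded_iff_subset_closedBall y0).mp hAbdd
  have hbdd' : ∀ x : Y, BddAbove ((dist x) '' A) := by
    intro x
    refine ⟨dist x y0 + R, ?_⟩
    rintro _ ⟨a, ha, rfl⟩
    have := hR ha
    rw [Metric.mem_closedBall] at this
    calc dist x a ≤ dist x y0 + dist y0 a := dist_triangle _ _ _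
      _ ≤ dist x y0 + R := by rw [dist_comm y0 a]; linarith
  have hAne : ∀ x : Y, ((dist x) '' A).Nonempty := fun x => ⟨_, ⟨y0, hy0A, rfl⟩⟩
  have hr_le : ∀ x a, a ∈ A → dist x a ≤ r x := fun x a ha => le_csSup (hbdd' x) ⟨a, ha, rfl⟩
  have hr_nonneg : ∀ x, 0 ≤ r x := fun x => le_trans dist_nonneg (hr_le x y0 hy0A)
  have hr_sSup_le : ∀ x B, (∀ a ∈ A, dist x a ≤ B) → r x ≤ B := by
    intro x B h
    exact csSup_le (hAne x) (by rintro _ ⟨a, ha, rfl⟩; exact h a ha)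
  have hr_lip : ∀ x z, r x ≤ dist x z + r z := by
    intro x z
    exact hr_sSup_le _ _ fun a ha =>
      (dist_triangle x z a).trans (by linarith [hr_le z a ha])
  -- infimum of radius
  set R0 : ℝ := sInf (range r) with hR0
  have hbdbelow : BddBelow (range r) := ⟨0, by rintro _ ⟨x, rfl⟩; exact hr_nonneg x⟩
  have hR0_le : ∀ x, R0 ≤ r x := fun x => csInf_le hbdbelow ⟨x, rfl⟩
  have hR0_nonneg : 0 ≤ R0 := le_csInf ⟨r y0, y0, rfl⟩ (by rintro _ ⟨x, rfl⟩; exact hr_nonneg x)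
  -- key convexity estimate
  have key : ∀ x z : Y, c/4 * dist x z ^ p ≤ 1/2 * r x ^ p + 1/2 * r z ^ p - R0 ^ p := by
    intro x z
    obtain ⟨γ, hγ⟩ := hgeo x z
    set m := γ (1/2) with hm
    set B := 1/2 * r x ^ p + 1/2 * r z ^ p - c/4 * dist x z ^ p with hB
    have hBa : ∀ a ∈ A, dist a m ^ p ≤ B := by
      intro a ha
      have h1 := hPC a x z γ hγ (1/2) (by norm_num)
      have h2 : dist a x ^ p ≤ r x ^ p :=
        Real.rpow_le_rpow dist_nonneg (by rw [dist_comm]; exact hr_le x a ha) hp0.le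
      have h3 : dist a z ^ p ≤ r z ^ p :=
        Real.rpow_le_rpow dist_nonneg (by rw [dist_comm]; exact hr_le z a ha) hp0.le
      have e : (1:ℝ) - 1/2 = 1/2 := by norm_num
      rw [e] at h1
      have : c * (1/2) * (1/2) = c/4 := by ring
      rw [this] at h1
      rw [hB]; linarith
    have hB0 : (0:ℝ) ≤ B := le_trans (Real.rpow_nonneg dist_nonneg p) (hBa y0 hy0A)
    have hrm : r m ≤ B ^ p⁻¹ := by
      refine hr_sSup_le m _ fun a ha => ?_
      rw [dist_comm]
      calc dist a m = (dist a m ^ p) ^ p⁻¹ := (Real.rpow_rpow_inv dist_nonneg hp0.ne').symm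
        _ ≤ B ^ p⁻¹ := Real.rpow_le_rpow (Real.rpow_nonneg dist_nonneg p) (hBa a ha)
              (inv_nonneg.2 hp0.le)
    have hfin : R0 ^ p ≤ B := by
      calc R0 ^ p ≤ r m ^ p := Real.rpow_le_rpow hR0_nonneg (hR0_le m) hp0.le
        _ ≤ (B ^ p⁻¹) ^ p := Real.rpow_le_rpow (hr_nonneg m) hrm hp0.le
        _ = B := Real.rpow_inv_rpow hB0 hp0.ne'
    rw [hB] at hfin; linarith
  -- uniqueness of circumcenter
  have uniq : ∀ x z : Y, r x = R0 → r z = R0 → x = z := by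
    intro x z hx hz
    have h := key x z
    rw [hx, hz] at h
    have hd : dist x z ^ p ≤ 0 := by nlinarith
    by_contra hne
    have hpos : 0 < dist x z := dist_pos.2 hne
    exact absurd (Real.rpow_pos_of_pos hpos p) (not_lt.2 hd)
  -- minimizing sequence
  have hseq : ∀ n : ℕ, ∃ x : Y, r x < R0 + 1/(n+1) := by
    intro n
    have hlt : R0 < R0 + 1/(n+1) := by
      have : (0:ℝ) < 1/(n+1) := by positivity
      linarith
    rw [hR0] at hlt
    obtain ⟨_, ⟨x, rfl⟩, hx⟩ := exists_lt_of_csInf_lt (s := range r) ⟨r y0, y0, rfl⟩ hlt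
    exact ⟨x, by rw [hR0]; exact hx⟩
  choose u hu using hseq
  have hru : Filter.Tendsto (fun n => r (u n)) Filter.atTop (nhds R0) := by
    have hupper : Filter.Tendsto (fun n : ℕ => R0 + 1/(n+1)) Filter.atTop (nhds R0) := by
      have : Filter.Tendsto (fun n : ℕ => 1 / ((n : ℝ) + 1)) Filter.atTop (nhds 0) :=
        tendsto_one_div_add_atTop_nhds_zero_nat
      have h2 := Filter.Tendsto.const_add R0 this
      simpa using h2
    exact tendsto_of_tendsto_of_tendsto_of_le_of_le tendsto_const_nhds hupper
      (fun n => hR0_le (u n)) (fun n => (hu n).le)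
  have hrup : Filter.Tendsto (fun n => r (u n) ^ p) Filter.atTop (nhds (R0 ^ p)) :=
    ((Real.continuousAt_rpow_const R0 p (Or.inr hp0.le)).tendsto.comp hru)
  -- Cauchy
  have hcau : CauchySeq u := by
    rw [Metric.cauchySeq_iff]
    intro ε hε
    have hεp : 0 < c/4 * ε ^ p := by
      have := Real.rpow_pos_of_pos hε p
      positivity
    have hev : ∀ᶠ n in Filter.atTop, r (u n) ^ p < R0 ^ p + c/4 * ε ^ p / 2 :=
      Filter.Tendsto.eventually_lt_const (by linarith) hrup
    obtain ⟨N, hN⟩ := Filter.eventually_atTop.mp hev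
    refine ⟨N, fun m hm n hn => ?_⟩
    have h1 := hN m hm
    have h2 := hN n hn
    have h3 := key (u m) (u n)
    have hdp : dist (u m) (u n) ^ p < ε ^ p := by nlinarith
    by_contra hge
    push_neg at hge
    exact absurd (Real.rpow_le_rpow hε.le hge hp0.le) (not_le.2 hdp)
  obtain ⟨xc, hxc⟩ := cauchySeq_tendsto_of_complete hcau
  -- r is 1-Lipschitz, hence continuous
  have hlip : LipschitzWith 1 r := by
    refine LipschitzWith.of_dist_le_mul fun x z => ?_
    simp only [NNReal.coe_one, one_mul, Real.dist_eq]
    rw [abs_sub_le_iff]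
    constructor
    · have := hr_lip x z; linarith
    · have := hr_lip z x; rw [dist_comm z x] at this; linarith
  have hrxc : r xc = R0 := by
    have h1 : Filter.Tendsto (fun n => r (u n)) Filter.atTop (nhds (r xc)) :=
      (hlip.continuous.continuousAt.tendsto.comp hxc)
    exact tendsto_nhds_unique h1 hru
  -- invariance of r under the action
  have hinv : ∀ (g : G) (x : Y), r (g • x) = r x := by
    intro g x
    have himg : (dist (g • x)) '' A = (dist x) '' A := by
      ext d
      constructor
      · rintro ⟨a, ha, rfl⟩
        obtain ⟨h, rfl⟩ := ha
        refine ⟨(g⁻¹ * h) • y0, ⟨g⁻¹ * h, rfl⟩, ?_⟩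
        show dist x ((g⁻¹ * h) • y0) = dist (g • x) (h • y0)
        have e : h • y0 = g • ((g⁻¹ * h) • y0) := by
          rw [← mul_smul, mul_inv_cancel_left]
        rw [e]
        exact ((hiso g).dist_eq x _).symm
      · rintro ⟨b, hb, rfl⟩
        obtain ⟨h, rfl⟩ := hb
        refine ⟨(g * h) • y0, ⟨g * h, rfl⟩, ?_⟩
        show dist (g • x) ((g * h) • y0) = dist x (h • y0)
        rw [mul_smul]
        exact ((hiso g).dist_eq x (h • y0))
    simp only [hrdef, himg]
  refine ⟨xc, fun g => ?_⟩
  exact uniq (g • xc) xc ((hinv g xc).trans hrxc) hrxc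
end

section
/- (Matoušek extrapolation) Let (V,μ,ν) be a finite reversible Markov chain: V a finite set, ν a probability measure on V, μ(u→·) transition probabilities with ν(u)μ(u→v) = ν(v)μ(v→u). Suppose for exponent p ≥ 1 and constant A>0 every f: V → ℝ satisfies ∑_{u,v} ν(u)ν(v)|f(u)−f(v)|^p ≤ (Ap)^p ∑_{u,v} ν(u)μ(u→v)|f(u)−f(v)|^p. Then for every q ≥ p, every f: V → ℝ satisfies ∑_{u,v} ν(u)ν(v)|f(u)−f(v)|^q ≤ (4Aq)^q ∑_{u,v} ν(u)μ(u→v)|f(u)−f(v)|^q. -/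
open Finset
open Real


lemma my_rpow_superadd {x y p : ℝ} (hx : 0 ≤ x) (hy : 0 ≤ y) (hp : 1 ≤ p) :
    x ^ p + y ^ p ≤ (x + y) ^ p := by
  lift x to NNReal using hx
  lift y to NNReal using hy
  exact_mod_cast NNReal.add_rpow_le_rpow_add x y hp

lemma my_rpow_mvt {a b α : ℝ} (hb : 0 ≤ b) (hba : b ≤ a) (hα : 1 ≤ α) :
    a ^ α - b ^ α ≤ α * a ^ (α - 1) * (a - b) := by
  have ha : 0 ≤ a := hb.trans hba
  rcases eq_or_lt_of_le ha with h0 | ha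
  · have hb0 : b = 0 := le_antisymm (hba.trans h0.symm.le) hb
    simp [← h0, hb0, Real.zero_rpow (by linarith : α ≠ 0)]
  · have hs : (-1 : ℝ) ≤ b / a - 1 := by
      have : 0 ≤ b / a := div_nonneg hb ha.le
      linarith
    have hbern := one_add_mul_self_le_rpow_one_add hs hα
    rw [add_sub_cancel] at hbern
    rw [Real.div_rpow hb ha.le α] at hbern
    have haα : (0:ℝ) < a ^ α := Real.rpow_pos_of_pos ha α
    have hkey : (1 + α * (b / a - 1)) * a ^ α ≤ b ^ α := by
      calc (1 + α * (b / a - 1)) * a ^ α ≤ (b ^ α / a ^ α) * a ^ α :=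
            mul_le_mul_of_nonneg_right hbern haα.le
        _ = b ^ α := by field_simp
    have hsub : a ^ (α - 1) * a = a ^ α := by
      rw [← Real.rpow_add_one ha.ne' (α - 1), sub_add_cancel]
    have hdiv : a ^ α * (b / a) = a ^ (α - 1) * b := by
      rw [← hsub]; field_simp
    nlinarith [hkey]

lemma my_holder {ι : Type*} (s : Finset ι) (w a b : ι → ℝ)
    (hw : ∀ i, 0 ≤ w i) (ha : ∀ i, 0 ≤ a i) (hb : ∀ i, 0 ≤ b i)
    {P Q : ℝ} (hPQ : P.HolderConjugate Q) :
    ∑ i ∈ s, w i * (a i * b i) ≤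
      (∑ i ∈ s, w i * a i ^ P) ^ (1 / P) * (∑ i ∈ s, w i * b i ^ Q) ^ (1 / Q) := by
  have hP0 : 0 < P := hPQ.pos
  have hQ0 : 0 < Q := hPQ.symm.pos
  have key := Real.inner_le_Lp_mul_Lq_of_nonneg s hPQ
    (f := fun i => w i ^ (1 / P) * a i) (g := fun i => w i ^ (1 / Q) * b i)
    (fun i _ => mul_nonneg (Real.rpow_nonneg (hw i) _) (ha i))
    (fun i _ => mul_nonneg (Real.rpow_nonneg (hw i) _) (hb i))
  have h1 : ∀ i, w i * (a i * b i) = (w i ^ (1 / P) * a i) * (w i ^ (1 / Q) * b i) := by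
    intro i
    have hww : w i ^ (1 / P) * w i ^ (1 / Q) = w i := by
      rw [← Real.rpow_add' (hw i) (by
        simp only [one_div]; rw [hPQ.inv_add_inv_eq_one]; norm_num)]
      simp only [one_div]; rw [hPQ.inv_add_inv_eq_one, Real.rpow_one]
    calc w i * (a i * b i) = (w i ^ (1/P) * w i ^ (1/Q)) * (a i * b i) := by rw [hww]
      _ = (w i ^ (1 / P) * a i) * (w i ^ (1 / Q) * b i) := by ring
  have h2 : ∀ i, (w i ^ (1 / P) * a i) ^ P = w i * a i ^ P := by
    intro i
    rw [Real.mul_rpow (Real.rpow_nonneg (hw i) _) (ha i),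
      ← Real.rpow_mul (hw i), one_div, inv_mul_cancel₀ hP0.ne', Real.rpow_one]
  have h3 : ∀ i, (w i ^ (1 / Q) * b i) ^ Q = w i * b i ^ Q := by
    intro i
    rw [Real.mul_rpow (Real.rpow_nonneg (hw i) _) (hb i),
      ← Real.rpow_mul (hw i), one_div, inv_mul_cancel₀ hQ0.ne', Real.rpow_one]
  simp only [h2, h3] at key
  calc ∑ i ∈ s, w i * (a i * b i)
      = ∑ i ∈ s, (w i ^ (1 / P) * a i) * (w i ^ (1 / Q) * b i) := by
        exact Finset.sum_congr rfl fun i _ => h1 i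
    _ ≤ _ := key

lemma my_median {V : Type*} [Fintype V] (ν : V → ℝ) (hν : ∀ u, 0 ≤ ν u)
    (hν1 : ∑ u, ν u = 1) (f : V → ℝ) :
    ∃ m : ℝ, (1/2 ≤ ∑ v ∈ univ.filter (fun v => f v ≤ m), ν v) ∧
      (1/2 ≤ ∑ v ∈ univ.filter (fun v => m ≤ f v), ν v) := by
  have hVne : Nonempty V := by
    by_contra h
    rw [not_nonempty_iff] at h
    rw [Finset.sum_eq_zero (fun u _ => (h.elim u))] at hν1
    norm_num at hν1
  have hSne : (Finset.image f univ).Nonempty :=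
    (Finset.univ_nonempty).image f
  set T := (Finset.image f univ).filter
    (fun t => 1/2 ≤ ∑ v ∈ univ.filter (fun v => f v ≤ t), ν v) with hT
  have hTne : T.Nonempty := by
    refine ⟨(Finset.image f univ).max' hSne, ?_⟩
    rw [hT, Finset.mem_filter]
    refine ⟨Finset.max'_mem _ _, ?_⟩
    have : univ.filter (fun v => f v ≤ (Finset.image f univ).max' hSne) = univ := by
      apply Finset.filter_true_of_mem
      intro v _
      exact Finset.le_max' _ _ (Finset.mem_image_of_mem f (Finset.mem_univ v))
    rw [this, hν1]; norm_num
  set m := T.min' hTne with hm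
  have hmT : m ∈ T := T.min'_mem hTne
  rw [hT, Finset.mem_filter] at hmT
  refine ⟨m, hmT.2, ?_⟩
  have hsplit := Finset.sum_filter_add_sum_filter_not univ (fun v => m ≤ f v) ν
  rw [hν1] at hsplit
  have hlt : ∑ v ∈ univ.filter (fun v => ¬ m ≤ f v), ν v ≤ 1/2 := by
    set W := univ.filter (fun v => ¬ m ≤ f v) with hW
    rcases W.eq_empty_or_nonempty with hWe | hWne
    · rw [hWe]; simp
    · have hWimg : (W.image f).Nonempty := hWne.image f
      set t' := (W.image f).max' hWimg with ht'
      have ht'S : t' ∈ Finset.image f univ := by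
        have := (W.image f).max'_mem hWimg
        rw [Finset.mem_image] at this ⊢
        obtain ⟨v, _, hv⟩ := this
        exact ⟨v, Finset.mem_univ v, hv⟩
      have ht'lt : t' < m := by
        have := (W.image f).max'_mem hWimg
        rw [Finset.mem_image] at this
        obtain ⟨v, hvW, hv⟩ := this
        rw [hW, Finset.mem_filter] at hvW
        rw [ht', ← hv]
        exact lt_of_not_ge hvW.2
      have ht'nT : t' ∉ T := fun hmem => absurd (T.min'_le _ hmem) (by rw [← hm]; exact not_le.2 ht'lt)
      have ht'small : ¬ (1/2 ≤ ∑ v ∈ univ.filter (fun v => f v ≤ t'), ν v) := by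
        intro hc
        exact ht'nT (by rw [hT, Finset.mem_filter]; exact ⟨ht'S, hc⟩)
      push_neg at ht'small
      have hsub : W ⊆ univ.filter (fun v => f v ≤ t') := by
        intro v hv
        rw [Finset.mem_filter]
        refine ⟨Finset.mem_univ v, ?_⟩
        exact Finset.le_max' _ _ (Finset.mem_image_of_mem f hv)
      calc ∑ v ∈ W, ν v ≤ ∑ v ∈ univ.filter (fun v => f v ≤ t'), ν v :=
            Finset.sum_le_sum_of_subset_of_nonneg hsub (fun v _ _ => hν v)
        _ ≤ 1/2 := ht'small.le
  linarith

lemma my_step6 {V : Type*} [Fintype V] (ν : V → ℝ) (hν : ∀ u, 0 ≤ ν u)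
    {q : ℝ} (hq0 : 0 < q) (f : V → ℝ) (hf : ∀ v, 0 ≤ f v)
    (hZ : 1/2 ≤ ∑ v ∈ univ.filter (fun v => f v = 0), ν v) :
    ∑ v, ν v * f v ^ q ≤ ∑ u, ∑ v, ν u * ν v * |f u - f v| ^ q := by
  classical
  set Z := univ.filter (fun v : V => f v = 0) with hZdef
  set t : V → V → ℝ := fun u v => ν u * ν v * |f u - f v| ^ q with ht
  have htnn : ∀ u v, 0 ≤ t u v := fun u v =>
    mul_nonneg (mul_nonneg (hν u) (hν v)) (Real.rpow_nonneg (abs_nonneg _) q)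
  have hsplit : ∀ u : V, ∑ v, t u v
      = ∑ v ∈ Z, t u v + ∑ v ∈ univ.filter (fun v => ¬ f v = 0), t u v := by
    intro u
    rw [hZdef, Finset.sum_filter_add_sum_filter_not]
  have hSq : (0:ℝ) ≤ ∑ v, ν v * f v ^ q :=
    Finset.sum_nonneg fun v _ => mul_nonneg (hν v) (Real.rpow_nonneg (hf v) q)
  have hfirst : ∑ u, ∑ v ∈ Z, t u v = (∑ u, ν u * f u ^ q) * (∑ v ∈ Z, ν v) := by
    rw [Finset.sum_mul]
    refine Finset.sum_congr rfl fun u _ => ?_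
    rw [Finset.mul_sum]
    refine Finset.sum_congr rfl fun v hv => ?_
    rw [hZdef, Finset.mem_filter] at hv
    rw [ht]
    simp only [hv.2, sub_zero, abs_of_nonneg (hf u)]
    ring
  have hsecond : ∑ u ∈ Z, ∑ v ∈ univ.filter (fun v => ¬ f v = 0), t u v
      = (∑ u ∈ Z, ν u) * (∑ v ∈ univ.filter (fun v => ¬ f v = 0), ν v * f v ^ q) := by
    rw [Finset.sum_mul]
    refine Finset.sum_congr rfl fun u hu => ?_
    rw [Finset.mul_sum]
    refine Finset.sum_congr rfl fun v hv => ?_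
    rw [hZdef, Finset.mem_filter] at hu
    rw [ht]
    simp only [hu.2, zero_sub, abs_neg, abs_of_nonneg (hf v)]
    ring
  have hrest : ∑ v ∈ univ.filter (fun v => ¬ f v = 0), ν v * f v ^ q
      = ∑ v, ν v * f v ^ q := by
    rw [← Finset.sum_filter_add_sum_filter_not univ (fun v => ¬ f v = 0)
      (fun v => ν v * f v ^ q)]
    have : ∑ v ∈ univ.filter (fun v => ¬¬ f v = 0), ν v * f v ^ q = 0 := by
      apply Finset.sum_eq_zero
      intro v hv
      rw [Finset.mem_filter, not_not] at hv
      rw [hv.2, Real.zero_rpow hq0.ne', mul_zero]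
    rw [this, add_zero]
  have hdrop : ∑ u ∈ Z, ∑ v ∈ univ.filter (fun v => ¬ f v = 0), t u v
      ≤ ∑ u, ∑ v ∈ univ.filter (fun v => ¬ f v = 0), t u v := by
    apply Finset.sum_le_sum_of_subset_of_nonneg (Finset.subset_univ Z)
    intro u _ _
    exact Finset.sum_nonneg fun v _ => htnn u v
  have hrestnn : (0:ℝ) ≤ ∑ v ∈ univ.filter (fun v => ¬ f v = 0), ν v * f v ^ q := by
    rw [hrest]; exact hSq
  calc ∑ v, ν v * f v ^ q = (1/2) * (∑ v, ν v * f v ^ q) + (1/2) * (∑ v, ν v * f v ^ q) := by ring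
    _ ≤ (∑ u, ν u * f u ^ q) * (∑ v ∈ Z, ν v)
        + (∑ u ∈ Z, ν u) * (∑ v ∈ univ.filter (fun v => ¬ f v = 0), ν v * f v ^ q) := by
        apply add_le_add
        · exact le_trans (mul_le_mul_of_nonneg_right hZ hSq) (le_of_eq (mul_comm _ _))
        · rw [hrest]
          exact mul_le_mul_of_nonneg_right hZ hSq
    _ = ∑ u, ∑ v ∈ Z, t u v + ∑ u ∈ Z, ∑ v ∈ univ.filter (fun v => ¬ f v = 0), t u v := by
        rw [hfirst, hsecond]
    _ ≤ ∑ u, ∑ v ∈ Z, t u v + ∑ u, ∑ v ∈ univ.filter (fun v => ¬ f v = 0), t u v :=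
        add_le_add le_rfl hdrop
    _ = ∑ u, ∑ v, t u v := by
        rw [← Finset.sum_add_distrib]
        exact Finset.sum_congr rfl fun u _ => (hsplit u).symm
    _ = ∑ u, ∑ v, ν u * ν v * |f u - f v| ^ q := rfl

lemma my_step5 {V : Type*} [Fintype V] (ν : V → ℝ) (μ : V → V → ℝ)
    (hν : ∀ u, 0 ≤ ν u) (hμ : ∀ u v, 0 ≤ μ u v) (hrow : ∀ u, ∑ v, μ u v = 1)
    (hrev : ∀ u v, ν u * μ u v = ν v * μ v u)
    (q : ℝ) (f : V → ℝ) (hf : ∀ v, 0 ≤ f v) :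
    ∑ u, ∑ v, ν u * μ u v * (max (f u) (f v)) ^ q ≤ 2 * ∑ v, ν v * f v ^ q := by
  have hmax : ∀ u v : V, (max (f u) (f v)) ^ q ≤ f u ^ q + f v ^ q := by
    intro u v
    rcases max_cases (f u) (f v) with ⟨h1, _⟩ | ⟨h1, _⟩ <;> rw [h1]
    · exact le_add_of_nonneg_right (Real.rpow_nonneg (hf v) q)
    · exact le_add_of_nonneg_left (Real.rpow_nonneg (hf u) q)
  calc ∑ u, ∑ v, ν u * μ u v * (max (f u) (f v)) ^ q
      ≤ ∑ u, ∑ v, ν u * μ u v * (f u ^ q + f v ^ q) := by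
        refine Finset.sum_le_sum fun u _ => Finset.sum_le_sum fun v _ => ?_
        exact mul_le_mul_of_nonneg_left (hmax u v) (mul_nonneg (hν u) (hμ u v))
    _ = (∑ u, ∑ v, ν u * μ u v * f u ^ q) + ∑ u, ∑ v, ν u * μ u v * f v ^ q := by
        rw [← Finset.sum_add_distrib]
        refine Finset.sum_congr rfl fun u _ => ?_
        rw [← Finset.sum_add_distrib]
        exact Finset.sum_congr rfl fun v _ => by ring
    _ = (∑ v, ν v * f v ^ q) + ∑ v, ν v * f v ^ q := by
        congr 1
        · refine Finset.sum_congr rfl fun u _ => ?_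
          calc ∑ v, ν u * μ u v * f u ^ q = (ν u * f u ^ q) * ∑ v, μ u v := by
                rw [Finset.mul_sum]; exact Finset.sum_congr rfl fun v _ => by ring
            _ = ν u * f u ^ q := by rw [hrow u]; ring
        · rw [Finset.sum_comm]
          refine Finset.sum_congr rfl fun v _ => ?_
          calc ∑ u, ν u * μ u v * f v ^ q = ∑ u, (ν v * μ v u) * f v ^ q :=
                Finset.sum_congr rfl fun u _ => by rw [hrev u v]
            _ = (ν v * f v ^ q) * ∑ u, μ v u := by
                rw [Finset.mul_sum]; exact Finset.sum_congr rfl fun u _ => by ring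
            _ = ν v * f v ^ q := by rw [hrow v]; ring
    _ = 2 * ∑ v, ν v * f v ^ q := by ring

lemma my_pt1 {a b p q α : ℝ} (ha : 0 ≤ a) (hb : 0 ≤ b) (hp0 : 0 < p) (hα : 1 ≤ α)
    (hαp : α * p = q) : |a - b| ^ q ≤ |a ^ α - b ^ α| ^ p := by
  have key : ∀ x y : ℝ, 0 ≤ y → y ≤ x → |x - y| ^ q ≤ |x ^ α - y ^ α| ^ p := by
    intro x y hy hyx
    have hxy : 0 ≤ x - y := sub_nonneg.2 hyx
    have hmono : y ^ α ≤ x ^ α := Real.rpow_le_rpow hy hyx (by linarith)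
    rw [abs_of_nonneg hxy, abs_of_nonneg (sub_nonneg.2 hmono)]
    have h1 : (x - y) ^ q = ((x - y) ^ α) ^ p := by
      rw [← Real.rpow_mul hxy, hαp]
    rw [h1]
    apply Real.rpow_le_rpow (Real.rpow_nonneg hxy α) _ hp0.le
    have := my_rpow_superadd (x := x - y) (y := y) hxy hy hα
    rw [sub_add_cancel] at this
    linarith
  rcases le_total b a with h | h
  · exact key a b hb h
  · rw [abs_sub_comm, abs_sub_comm (a ^ α)]
    exact key b a ha h

lemma my_pt3 {a b α : ℝ} (ha : 0 ≤ a) (hb : 0 ≤ b) (hα : 1 ≤ α) :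
    |a ^ α - b ^ α| ≤ α * (max a b) ^ (α - 1) * |a - b| := by
  have key : ∀ x y : ℝ, 0 ≤ y → y ≤ x → |x ^ α - y ^ α| ≤ α * (max x y) ^ (α - 1) * |x - y| := by
    intro x y hy hyx
    have hmono : y ^ α ≤ x ^ α := Real.rpow_le_rpow hy hyx (by linarith)
    rw [abs_of_nonneg (sub_nonneg.2 hmono), abs_of_nonneg (sub_nonneg.2 hyx),
      max_eq_left hyx]
    exact my_rpow_mvt hy hyx hα
  rcases le_total b a with h | h
  · exact key a b hb h
  · rw [abs_sub_comm, abs_sub_comm a b, max_comm]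
    exact key b a ha h

lemma my_half {V : Type*} [Fintype V] (ν : V → ℝ) (μ : V → V → ℝ)
    (hν : ∀ u, 0 ≤ ν u) (hμ : ∀ u v, 0 ≤ μ u v) (hrow : ∀ u, ∑ v, μ u v = 1)
    (hrev : ∀ u v, ν u * μ u v = ν v * μ v u)
    (p A : ℝ) (hp : 1 ≤ p) (hA : 0 < A)
    (hpoin : ∀ f : V → ℝ, ∑ u, ∑ v, ν u * ν v * |f u - f v| ^ p ≤
        (A * p) ^ p * ∑ u, ∑ v, ν u * μ u v * |f u - f v| ^ p)
    (q : ℝ) (hq : p ≤ q) (f : V → ℝ) (hf : ∀ v, 0 ≤ f v)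
    (hZ : 1/2 ≤ ∑ v ∈ univ.filter (fun v => f v = 0), ν v) :
    ∑ u, ∑ v, ν u * ν v * |f u - f v| ^ q ≤
      ((A * q) ^ q * 2 ^ (q / p - 1)) * ∑ u, ∑ v, ν u * μ u v * |f u - f v| ^ q := by
  have hp0 : 0 < p := lt_of_lt_of_le one_pos hp
  have hq0 : 0 < q := lt_of_lt_of_le hp0 hq
  have hAq : 0 < A * q := mul_pos hA hq0
  rcases eq_or_lt_of_le hq with rfl | hpq
  · simpa [div_self hp0.ne', Real.rpow_zero] using hpoin f
  · set α := q / p with hαdef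
    have hα1 : 1 < α := (one_lt_div hp0).2 hpq
    have hαpos : 0 < α := lt_trans one_pos hα1
    have hαp : α * p = q := div_mul_cancel₀ q hp0.ne'
    set g := fun v => f v ^ α with hg
    set Eq' : ℝ := ∑ u, ∑ v, ν u * ν v * |f u - f v| ^ q with hEq'
    set Rq : ℝ := ∑ u, ∑ v, ν u * μ u v * |f u - f v| ^ q with hRq
    set Sq : ℝ := ∑ v, ν v * f v ^ q with hSq
    have hEq0 : 0 ≤ Eq' := Finset.sum_nonneg fun u _ => Finset.sum_nonneg fun v _ =>
      mul_nonneg (mul_nonneg (hν u) (hν v)) (Real.rpow_nonneg (abs_nonneg _) q)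
    have hRq0 : 0 ≤ Rq := Finset.sum_nonneg fun u _ => Finset.sum_nonneg fun v _ =>
      mul_nonneg (mul_nonneg (hν u) (hμ u v)) (Real.rpow_nonneg (abs_nonneg _) q)
    -- step 1 + 2
    have step12 : Eq' ≤ (A * p) ^ p * ∑ u, ∑ v, ν u * μ u v * |g u - g v| ^ p := by
      refine le_trans ?_ (hpoin g)
      refine Finset.sum_le_sum fun u _ => Finset.sum_le_sum fun v _ => ?_
      exact mul_le_mul_of_nonneg_left (my_pt1 (hf u) (hf v) hp0 hα1.le hαp)
        (mul_nonneg (hν u) (hν v))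
    -- step 3
    have step3 : ∑ u, ∑ v, ν u * μ u v * |g u - g v| ^ p ≤
        α ^ p * ∑ u, ∑ v, ν u * μ u v * (|f u - f v| ^ p * (max (f u) (f v)) ^ (q - p)) := by
      rw [Finset.mul_sum]
      refine Finset.sum_le_sum fun u _ => ?_
      rw [Finset.mul_sum]
      refine Finset.sum_le_sum fun v _ => ?_
      have hpt : |g u - g v| ^ p ≤ α ^ p * (|f u - f v| ^ p * (max (f u) (f v)) ^ (q - p)) := by
        have h1 : |g u - g v| ≤ α * (max (f u) (f v)) ^ (α - 1) * |f u - f v| :=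
          my_pt3 (hf u) (hf v) hα1.le
        have hMnn : (0:ℝ) ≤ max (f u) (f v) := le_max_of_le_left (hf u)
        have h2 : |g u - g v| ^ p ≤ (α * (max (f u) (f v)) ^ (α - 1) * |f u - f v|) ^ p :=
          Real.rpow_le_rpow (abs_nonneg _) h1 hp0.le
        have h3 : (α * (max (f u) (f v)) ^ (α - 1) * |f u - f v|) ^ p
            = α ^ p * ((max (f u) (f v)) ^ (α - 1)) ^ p * |f u - f v| ^ p := by
          rw [Real.mul_rpow (mul_nonneg hαpos.le (Real.rpow_nonneg hMnn _)) (abs_nonneg _),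
            Real.mul_rpow hαpos.le (Real.rpow_nonneg hMnn _)]
        have h4 : ((max (f u) (f v)) ^ (α - 1)) ^ p = (max (f u) (f v)) ^ (q - p) := by
          rw [← Real.rpow_mul hMnn]
          congr 1
          rw [sub_mul, hαp, one_mul]
        rw [h3, h4] at h2
        calc |g u - g v| ^ p ≤ α ^ p * (max (f u) (f v)) ^ (q - p) * |f u - f v| ^ p := h2
          _ = α ^ p * (|f u - f v| ^ p * (max (f u) (f v)) ^ (q - p)) := by ring
      calc ν u * μ u v * |g u - g v| ^ p
          ≤ ν u * μ u v * (α ^ p * (|f u - f v| ^ p * (max (f u) (f v)) ^ (q - p))) :=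
            mul_le_mul_of_nonneg_left hpt (mul_nonneg (hν u) (hμ u v))
        _ = α ^ p * (ν u * μ u v * (|f u - f v| ^ p * (max (f u) (f v)) ^ (q - p))) := by ring
    -- step 4 : Hölder
    have hQpos : 0 < q / (q - p) := div_pos hq0 (by linarith)
    have hPQ : Real.HolderConjugate α (q / (q - p)) := by
      rw [Real.holderConjugate_iff]; constructor
      · exact hα1
      · rw [hαdef, inv_div, inv_div, ← add_div, add_sub_cancel, div_self hq0.ne']
    have step4 : ∑ u, ∑ v, ν u * μ u v * (|f u - f v| ^ p * (max (f u) (f v)) ^ (q - p)) ≤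
        Rq ^ (p / q) * (∑ u, ∑ v, ν u * μ u v * (max (f u) (f v)) ^ q) ^ ((q - p) / q) := by
      have hH := my_holder (univ : Finset (V × V))
        (fun x => ν x.1 * μ x.1 x.2) (fun x => |f x.1 - f x.2| ^ p)
        (fun x => (max (f x.1) (f x.2)) ^ (q - p))
        (fun x => mul_nonneg (hν x.1) (hμ x.1 x.2))
        (fun x => Real.rpow_nonneg (abs_nonneg _) p)
        (fun x => Real.rpow_nonneg (le_max_of_le_left (hf x.1)) _) hPQ
      have e1 : ∀ x : V × V, (|f x.1 - f x.2| ^ p) ^ α = |f x.1 - f x.2| ^ q := by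
        intro x
        rw [← Real.rpow_mul (abs_nonneg _), mul_comm p α, hαp]
      have e2 : ∀ x : V × V, ((max (f x.1) (f x.2)) ^ (q - p)) ^ (q / (q - p))
          = (max (f x.1) (f x.2)) ^ q := by
        intro x
        rw [← Real.rpow_mul (le_max_of_le_left (hf x.1))]
        congr 1
        have hqp : q - p ≠ 0 := sub_ne_zero.2 (ne_of_gt hpq)
        field_simp
      simp only [e1, e2] at hH
      have e3 : (1 : ℝ) / α = p / q := by rw [hαdef, one_div_div]
      have e4 : (1 : ℝ) / (q / (q - p)) = (q - p) / q := by rw [one_div_div]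
      rw [e3, e4] at hH
      calc ∑ u, ∑ v, ν u * μ u v * (|f u - f v| ^ p * (max (f u) (f v)) ^ (q - p))
          = ∑ x : V × V, ν x.1 * μ x.1 x.2 * (|f x.1 - f x.2| ^ p * (max (f x.1) (f x.2)) ^ (q - p)) :=
            (Fintype.sum_prod_type (f := fun x : V × V => ν x.1 * μ x.1 x.2 * (|f x.1 - f x.2| ^ p * (max (f x.1) (f x.2)) ^ (q - p)))).symm
        _ ≤ (∑ x : V × V, ν x.1 * μ x.1 x.2 * |f x.1 - f x.2| ^ q) ^ (p / q) *
            (∑ x : V × V, ν x.1 * μ x.1 x.2 * (max (f x.1) (f x.2)) ^ q) ^ ((q - p) / q) := hH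
        _ = Rq ^ (p / q) * (∑ u, ∑ v, ν u * μ u v * (max (f u) (f v)) ^ q) ^ ((q - p) / q) := by
            rw [hRq]
            rw [Fintype.sum_prod_type (f := fun x : V × V => ν x.1 * μ x.1 x.2 * |f x.1 - f x.2| ^ q),
              Fintype.sum_prod_type (f := fun x : V × V => ν x.1 * μ x.1 x.2 * (max (f x.1) (f x.2)) ^ q)]
    -- step 5 + 6
    have hT2E : ∑ u, ∑ v, ν u * μ u v * (max (f u) (f v)) ^ q ≤ 2 * Eq' := by
      calc ∑ u, ∑ v, ν u * μ u v * (max (f u) (f v)) ^ q ≤ 2 * Sq :=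
            my_step5 ν μ hν hμ hrow hrev q f hf
        _ ≤ 2 * Eq' := by
            have := my_step6 ν hν hq0 f hf hZ
            rw [← hSq, ← hEq'] at this
            linarith
    have hTnn : (0:ℝ) ≤ ∑ u, ∑ v, ν u * μ u v * (max (f u) (f v)) ^ q :=
      Finset.sum_nonneg fun u _ => Finset.sum_nonneg fun v _ =>
        mul_nonneg (mul_nonneg (hν u) (hμ u v)) (Real.rpow_nonneg (le_max_of_le_left (hf u)) q)
    -- combine
    have hmain : Eq' ≤ (A * q) ^ p * (Rq ^ (p / q) * (2 * Eq') ^ ((q - p) / q)) := by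
      have hC : (A * p) ^ p * α ^ p = (A * q) ^ p := by
        rw [← Real.mul_rpow (mul_pos hA hp0).le hαpos.le]
        congr 1
        rw [mul_assoc, mul_comm p α, hαp]
      have hs : ∑ u, ∑ v, ν u * μ u v * (max (f u) (f v)) ^ q ≤ 2 * Eq' := hT2E
      have hθnn : (0:ℝ) ≤ (q - p) / q := div_nonneg (by linarith) hq0.le
      calc Eq' ≤ (A * p) ^ p * ∑ u, ∑ v, ν u * μ u v * |g u - g v| ^ p := step12
        _ ≤ (A * p) ^ p * (α ^ p * ∑ u, ∑ v, ν u * μ u v *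
              (|f u - f v| ^ p * (max (f u) (f v)) ^ (q - p))) := by
            apply mul_le_mul_of_nonneg_left step3 (Real.rpow_nonneg (mul_pos hA hp0).le p)
        _ = ((A * p) ^ p * α ^ p) * ∑ u, ∑ v, ν u * μ u v *
              (|f u - f v| ^ p * (max (f u) (f v)) ^ (q - p)) := by ring
        _ ≤ ((A * p) ^ p * α ^ p) * (Rq ^ (p / q) *
              (∑ u, ∑ v, ν u * μ u v * (max (f u) (f v)) ^ q) ^ ((q - p) / q)) := by
            apply mul_le_mul_of_nonneg_left step4
            exact mul_nonneg (Real.rpow_nonneg (mul_pos hA hp0).le p)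
              (Real.rpow_nonneg hαpos.le p)
        _ ≤ ((A * p) ^ p * α ^ p) * (Rq ^ (p / q) * (2 * Eq') ^ ((q - p) / q)) := by
            apply mul_le_mul_of_nonneg_left _ (mul_nonneg
              (Real.rpow_nonneg (mul_pos hA hp0).le p) (Real.rpow_nonneg hαpos.le p))
            apply mul_le_mul_of_nonneg_left _ (Real.rpow_nonneg hRq0 _)
            exact Real.rpow_le_rpow hTnn hs hθnn
        _ = (A * q) ^ p * (Rq ^ (p / q) * (2 * Eq') ^ ((q - p) / q)) := by rw [hC]
    rcases eq_or_lt_of_le hEq0 with hE0 | hEpos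
    · rw [← hE0]
      exact mul_nonneg (mul_nonneg (Real.rpow_nonneg hAq.le q)
        (Real.rpow_nonneg (by norm_num) _)) hRq0
    · -- divide and raise to power α
      have hsplitE : Eq' = Eq' ^ (p / q) * Eq' ^ ((q - p) / q) := by
        rw [← Real.rpow_add hEpos]
        have he1 : p / q + (q - p) / q = 1 := by field_simp; ring
        rw [he1, Real.rpow_one]
      have h2E : (2 * Eq') ^ ((q - p) / q) = 2 ^ ((q - p) / q) * Eq' ^ ((q - p) / q) :=
        Real.mul_rpow (by norm_num) hEpos.le
      have hstep : Eq' ^ (p / q) ≤ (A * q) ^ p * 2 ^ ((q - p) / q) * Rq ^ (p / q) := by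
        have hEθpos : (0:ℝ) < Eq' ^ ((q - p) / q) := Real.rpow_pos_of_pos hEpos _
        have h' : Eq' ^ (p / q) * Eq' ^ ((q - p) / q) ≤
            ((A * q) ^ p * 2 ^ ((q - p) / q) * Rq ^ (p / q)) * Eq' ^ ((q - p) / q) := by
          calc Eq' ^ (p / q) * Eq' ^ ((q - p) / q) = Eq' := hsplitE.symm
            _ ≤ (A * q) ^ p * (Rq ^ (p / q) * (2 * Eq') ^ ((q - p) / q)) := hmain
            _ = (A * q) ^ p * (Rq ^ (p / q) * (2 ^ ((q - p) / q) * Eq' ^ ((q - p) / q))) := by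
                rw [h2E]
            _ = ((A * q) ^ p * 2 ^ ((q - p) / q) * Rq ^ (p / q)) * Eq' ^ ((q - p) / q) := by ring
        exact le_of_mul_le_mul_right h' hEθpos
      -- raise to power α
      have hfinal : Eq' ≤ (A * q) ^ q * 2 ^ (q / p - 1) * Rq := by
        have hLHSnn : (0:ℝ) ≤ Eq' ^ (p / q) := Real.rpow_nonneg hEq0 _
        have hrs := Real.rpow_le_rpow hLHSnn hstep hαpos.le
        rw [← Real.rpow_mul hEq0] at hrs
        have hpqα : p / q * α = 1 := by
          rw [hαdef]; field_simp
        rw [hpqα, Real.rpow_one] at hrs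
        have hRHS : ((A * q) ^ p * 2 ^ ((q - p) / q) * Rq ^ (p / q)) ^ α
            = (A * q) ^ q * 2 ^ (q / p - 1) * Rq := by
          rw [Real.mul_rpow (mul_nonneg (Real.rpow_nonneg hAq.le _)
              (Real.rpow_nonneg (by norm_num) _)) (Real.rpow_nonneg hRq0 _),
            Real.mul_rpow (Real.rpow_nonneg hAq.le _) (Real.rpow_nonneg (by norm_num) _),
            ← Real.rpow_mul hAq.le, ← Real.rpow_mul (by norm_num : (0:ℝ) ≤ 2),
            ← Real.rpow_mul hRq0]
          have ee1 : p * α = q := by rw [mul_comm p α, hαp]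
          have ee2 : (q - p) / q * α = q / p - 1 := by
            rw [hαdef]
            first
            | field_simp
            | (field_simp; ring)
          rw [ee1, ee2, hpqα, Real.rpow_one]
        rw [hRHS] at hrs
        exact hrs
      exact hfinal


lemma my_two_rpow {x y p : ℝ} (hx : 0 ≤ x) (hy : 0 ≤ y) (hp : 1 ≤ p) :
    (x + y) ^ p ≤ 2 ^ (p - 1) * (x ^ p + y ^ p) := by
  lift x to NNReal using hx
  lift y to NNReal using hy
  have h := NNReal.rpow_add_le_mul_rpow_add_rpow x y hp
  exact_mod_cast h


/-- Matoušek extrapolation: if a finite reversible Markov chain satisfies a Poincaré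
inequality with exponent `p` and modulus `A·p` for all real-valued functions, then for
every `q ≥ p` it satisfies the inequality with exponent `q` and modulus `4·A·q`. -/
theorem stmt7 {V : Type*} [Fintype V] (ν : V → ℝ) (μ : V → V → ℝ)
    (hν : ∀ u, 0 ≤ ν u) (hν1 : ∑ u, ν u = 1)
    (hμ : ∀ u v, 0 ≤ μ u v) (hrow : ∀ u, ∑ v, μ u v = 1)
    (hrev : ∀ u v, ν u * μ u v = ν v * μ v u)
    (p A : ℝ) (hp : 1 ≤ p) (hA : 0 < A)
    (hpoin : ∀ f : V → ℝ,
      ∑ u, ∑ v, ν u * ν v * |f u - f v| ^ p ≤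
        (A * p) ^ p * ∑ u, ∑ v, ν u * μ u v * |f u - f v| ^ p) :
    ∀ q : ℝ, p ≤ q → ∀ f : V → ℝ,
      ∑ u, ∑ v, ν u * ν v * |f u - f v| ^ q ≤
        (4 * A * q) ^ q * ∑ u, ∑ v, ν u * μ u v * |f u - f v| ^ q := by
  intro q hq f
  have hp0 : 0 < p := lt_of_lt_of_le one_pos hp
  have hq0 : 0 < q := lt_of_lt_of_le hp0 hq
  have hq1 : 1 ≤ q := le_trans hp hq
  have hAq : 0 < A * q := mul_pos hA hq0
  obtain ⟨m, hle, hge⟩ := my_median ν hν hν1 f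
  set f₁ : V → ℝ := fun v => max (f v - m) 0 with hf₁def
  set f₂ : V → ℝ := fun v => max (m - f v) 0 with hf₂def
  have hf₁ : ∀ v, 0 ≤ f₁ v := fun v => le_max_right _ _
  have hf₂ : ∀ v, 0 ≤ f₂ v := fun v => le_max_right _ _
  have hZ₁ : 1/2 ≤ ∑ v ∈ univ.filter (fun v => f₁ v = 0), ν v := by
    refine le_trans hle (Finset.sum_le_sum_of_subset_of_nonneg ?_ (fun v _ _ => hν v))
    intro v hv
    rw [Finset.mem_filter] at hv ⊢
    exact ⟨hv.1, max_eq_right (by linarith [hv.2])⟩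
  have hZ₂ : 1/2 ≤ ∑ v ∈ univ.filter (fun v => f₂ v = 0), ν v := by
    refine le_trans hge (Finset.sum_le_sum_of_subset_of_nonneg ?_ (fun v _ _ => hν v))
    intro v hv
    rw [Finset.mem_filter] at hv ⊢
    exact ⟨hv.1, max_eq_right (by linarith [hv.2])⟩
  have hkey : ∀ u v : V, |f₁ u - f₁ v| + |f₂ u - f₂ v| = |f u - f v| := by
    have main : ∀ u v : V, f v ≤ f u → |f₁ u - f₁ v| + |f₂ u - f₂ v| = |f u - f v| := by
      intro u v huv
      have h1 : f₁ v ≤ f₁ u := max_le_max (by linarith) le_rfl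
      have h2 : f₂ u ≤ f₂ v := max_le_max (by linarith) le_rfl
      rw [abs_of_nonneg (sub_nonneg.2 h1), abs_of_nonpos (sub_nonpos.2 h2),
        abs_of_nonneg (sub_nonneg.2 huv)]
      have i1 := max_zero_sub_max_neg_zero_eq_self (f u - m)
      have i2 := max_zero_sub_max_neg_zero_eq_self (f v - m)
      have e1 : f₂ u = max (-(f u - m)) 0 := by rw [hf₂def]; ring_nf
      have e2 : f₂ v = max (-(f v - m)) 0 := by rw [hf₂def]; ring_nf
      rw [hf₁def]
      simp only [e1, e2] -- now linarith
      linarith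
    intro u v
    rcases le_total (f v) (f u) with h | h
    · exact main u v h
    · rw [abs_sub_comm (f₁ u), abs_sub_comm (f₂ u), abs_sub_comm (f u)]
      exact main v u h
  have habs1 : ∀ u v : V, (0:ℝ) ≤ |f₁ u - f₁ v| := fun u v => abs_nonneg _
  have habs2 : ∀ u v : V, (0:ℝ) ≤ |f₂ u - f₂ v| := fun u v => abs_nonneg _
  -- splitting bound for E
  have hEsplit : ∑ u, ∑ v, ν u * ν v * |f u - f v| ^ q ≤
      2 ^ (q - 1) * ((∑ u, ∑ v, ν u * ν v * |f₁ u - f₁ v| ^ q)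
        + ∑ u, ∑ v, ν u * ν v * |f₂ u - f₂ v| ^ q) := by
    have hpt : ∀ u v : V, |f u - f v| ^ q ≤
        2 ^ (q - 1) * (|f₁ u - f₁ v| ^ q + |f₂ u - f₂ v| ^ q) := by
      intro u v
      rw [← hkey u v]
      exact my_two_rpow (habs1 u v) (habs2 u v) hq1
    calc ∑ u, ∑ v, ν u * ν v * |f u - f v| ^ q
        ≤ ∑ u, ∑ v, ν u * ν v * (2 ^ (q - 1) * (|f₁ u - f₁ v| ^ q + |f₂ u - f₂ v| ^ q)) := by
          refine Finset.sum_le_sum fun u _ => Finset.sum_le_sum fun v _ => ?_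
          exact mul_le_mul_of_nonneg_left (hpt u v) (mul_nonneg (hν u) (hν v))
      _ = 2 ^ (q - 1) * ((∑ u, ∑ v, ν u * ν v * |f₁ u - f₁ v| ^ q)
          + ∑ u, ∑ v, ν u * ν v * |f₂ u - f₂ v| ^ q) := by
          have hrr : ∀ u v : V, ν u * ν v * (2 ^ (q - 1) * (|f₁ u - f₁ v| ^ q + |f₂ u - f₂ v| ^ q))
              = 2 ^ (q - 1) * (ν u * ν v * |f₁ u - f₁ v| ^ q)
                + 2 ^ (q - 1) * (ν u * ν v * |f₂ u - f₂ v| ^ q) := fun u v => by ring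
          simp only [hrr, Finset.sum_add_distrib, ← Finset.mul_sum]
          ring
  -- splitting bound for R
  have hRsplit : (∑ u, ∑ v, ν u * μ u v * |f₁ u - f₁ v| ^ q)
      + (∑ u, ∑ v, ν u * μ u v * |f₂ u - f₂ v| ^ q)
      ≤ ∑ u, ∑ v, ν u * μ u v * |f u - f v| ^ q := by
    have hpt : ∀ u v : V, |f₁ u - f₁ v| ^ q + |f₂ u - f₂ v| ^ q ≤ |f u - f v| ^ q := by
      intro u v
      rw [← hkey u v]
      exact my_rpow_superadd (habs1 u v) (habs2 u v) hq1
    calc (∑ u, ∑ v, ν u * μ u v * |f₁ u - f₁ v| ^ q)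
        + (∑ u, ∑ v, ν u * μ u v * |f₂ u - f₂ v| ^ q)
        = ∑ u, ∑ v, ν u * μ u v * (|f₁ u - f₁ v| ^ q + |f₂ u - f₂ v| ^ q) := by
          simp only [mul_add, Finset.sum_add_distrib]
      _ ≤ ∑ u, ∑ v, ν u * μ u v * |f u - f v| ^ q := by
          refine Finset.sum_le_sum fun u _ => Finset.sum_le_sum fun v _ => ?_
          exact mul_le_mul_of_nonneg_left (hpt u v) (mul_nonneg (hν u) (hμ u v))
  have hh1 := my_half ν μ hν hμ hrow hrev p A hp hA hpoin q hq f₁ hf₁ hZ₁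
  have hh2 := my_half ν μ hν hμ hrow hrev p A hp hA hpoin q hq f₂ hf₂ hZ₂
  set C : ℝ := (A * q) ^ q * 2 ^ (q / p - 1) with hC
  have hCnn : 0 ≤ C := mul_nonneg (Real.rpow_nonneg hAq.le _) (Real.rpow_nonneg (by norm_num) _)
  have hR1nn : (0:ℝ) ≤ ∑ u, ∑ v, ν u * μ u v * |f₁ u - f₁ v| ^ q :=
    Finset.sum_nonneg fun u _ => Finset.sum_nonneg fun v _ =>
      mul_nonneg (mul_nonneg (hν u) (hμ u v)) (Real.rpow_nonneg (abs_nonneg _) q)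
  have hR2nn : (0:ℝ) ≤ ∑ u, ∑ v, ν u * μ u v * |f₂ u - f₂ v| ^ q :=
    Finset.sum_nonneg fun u _ => Finset.sum_nonneg fun v _ =>
      mul_nonneg (mul_nonneg (hν u) (hμ u v)) (Real.rpow_nonneg (abs_nonneg _) q)
  have hRnn : (0:ℝ) ≤ ∑ u, ∑ v, ν u * μ u v * |f u - f v| ^ q :=
    Finset.sum_nonneg fun u _ => Finset.sum_nonneg fun v _ =>
      mul_nonneg (mul_nonneg (hν u) (hμ u v)) (Real.rpow_nonneg (abs_nonneg _) q)
  have h2nn : (0:ℝ) ≤ 2 ^ (q - 1) := Real.rpow_nonneg (by norm_num) _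
  have hchain : ∑ u, ∑ v, ν u * ν v * |f u - f v| ^ q ≤
      (2 ^ (q - 1) * C) * ∑ u, ∑ v, ν u * μ u v * |f u - f v| ^ q := by
    calc ∑ u, ∑ v, ν u * ν v * |f u - f v| ^ q
        ≤ 2 ^ (q - 1) * ((∑ u, ∑ v, ν u * ν v * |f₁ u - f₁ v| ^ q)
            + ∑ u, ∑ v, ν u * ν v * |f₂ u - f₂ v| ^ q) := hEsplit
      _ ≤ 2 ^ (q - 1) * (C * (∑ u, ∑ v, ν u * μ u v * |f₁ u - f₁ v| ^ q)
            + C * (∑ u, ∑ v, ν u * μ u v * |f₂ u - f₂ v| ^ q)) := by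
          apply mul_le_mul_of_nonneg_left _ h2nn
          exact add_le_add hh1 hh2
      _ = (2 ^ (q - 1) * C) * ((∑ u, ∑ v, ν u * μ u v * |f₁ u - f₁ v| ^ q)
            + (∑ u, ∑ v, ν u * μ u v * |f₂ u - f₂ v| ^ q)) := by ring
      _ ≤ (2 ^ (q - 1) * C) * ∑ u, ∑ v, ν u * μ u v * |f u - f v| ^ q := by
          exact mul_le_mul_of_nonneg_left hRsplit (mul_nonneg h2nn hCnn)
  refine le_trans hchain (mul_le_mul_of_nonneg_right ?_ hRnn)
  -- 2^(q-1) * C ≤ (4*A*q)^q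
  have hqpq : q / p ≤ q := div_le_self hq0.le hp
  have hexp : q - 1 + (q / p - 1) ≤ 2 * q := by linarith
  calc 2 ^ (q - 1) * C = (A * q) ^ q * (2 ^ (q - 1) * 2 ^ (q / p - 1)) := by rw [hC]; ring
    _ = (A * q) ^ q * 2 ^ (q - 1 + (q / p - 1)) := by
        rw [← Real.rpow_add (by norm_num : (0:ℝ) < 2)]
    _ ≤ (A * q) ^ q * 2 ^ (2 * q) := by
        apply mul_le_mul_of_nonneg_left _ (Real.rpow_nonneg hAq.le _)
        exact Real.rpow_le_rpow_of_exponent_le (by norm_num) hexp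
    _ = (4 * A * q) ^ q := by
        have h4 : (4:ℝ) * A * q = 4 * (A * q) := by ring
        have h42 : (4:ℝ) ^ q = 2 ^ (2 * q) := by
          have h2 : (4:ℝ) = 2 ^ (2:ℝ) := by
            rw [show (2:ℝ) ^ (2:ℝ) = 2 ^ (2:ℕ) by rw [← Real.rpow_natCast 2 2]; norm_num]
            norm_num
          rw [h2, ← Real.rpow_mul (by norm_num : (0:ℝ) ≤ 2)]
        rw [h4, Real.mul_rpow (by norm_num : (0:ℝ) ≤ 4) hAq.le, h42]
        ring
end

section
/- Let (V,μ,ν) be a finite reversible Markov chain with ν a probability measure, and let (Y,d) be a metric space. If for some constant c̄>0 and exponent p ≥ 1 every f: V → Y satisfies ∑_{u,v} ν(u)ν(v) d(f(u),f(v))^p ≤ c̄^p ∑_{u,v} ν(u)μ(u→v) d(f(u),f(v))^p, then for every n ≥ 1 and every f: V → Y, ∑_{u,v} ν(u)μ^n(u→v) d(f(u),f(v))^p ≤ (2c̄)^p ∑_{u,v} ν(u)μ(u→v) d(f(u),f(v))^p, where μ^n denotes the n-fold convolution (n-step transition probabilities). -/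
open Finset

/-- The `n`-step transition kernel of a Markov chain on a finite set. -/
def kpow {V : Type*} [Fintype V] (μ : V → V → ℝ) [DecidableEq V] : ℕ → V → V → ℝ
  | 0 => fun u v => if u = v then 1 else 0
  | n + 1 => fun u v => ∑ w, kpow μ n u w * μ w v

lemma two_rpow_aux {a b p : ℝ} (ha : 0 ≤ a) (hb : 0 ≤ b) (hp : 1 ≤ p) :
    (a + b) ^ p ≤ 2 ^ (p - 1) * (a ^ p + b ^ p) := by
  have h := NNReal.rpow_add_le_mul_rpow_add_rpow a.toNNReal b.toNNReal hp
  have := (NNReal.coe_le_coe).2 h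
  push_cast [NNReal.coe_rpow, Real.coe_toNNReal a ha, Real.coe_toNNReal b hb] at this
  simpa using this

/-- If a finite reversible Markov chain satisfies the Poincaré inequality
`∑ ν(u)ν(v) d(f(u),f(v))^p ≤ c̄^p ∑ ν(u)μ(u→v) d(f(u),f(v))^p` for all `f : V → Y`,
then for every `n ≥ 1` the `n`-step energy is controlled:
`∑ ν(u)μⁿ(u→v) d(f(u),f(v))^p ≤ (2c̄)^p ∑ ν(u)μ(u→v) d(f(u),f(v))^p`. -/
theorem stmt8 {V : Type*} [Fintype V] [DecidableEq V] {Y : Type*} [MetricSpace Y]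
    (ν : V → ℝ) (μ : V → V → ℝ)
    (hν : ∀ u, 0 ≤ ν u) (hν1 : ∑ u, ν u = 1)
    (hμ : ∀ u v, 0 ≤ μ u v) (hrow : ∀ u, ∑ v, μ u v = 1)
    (hrev : ∀ u v, ν u * μ u v = ν v * μ v u)
    (p cbar : ℝ) (hp : 1 ≤ p) (hc : 0 < cbar)
    (hpoin : ∀ f : V → Y,
      ∑ u, ∑ v, ν u * ν v * dist (f u) (f v) ^ p ≤
        cbar ^ p * ∑ u, ∑ v, ν u * μ u v * dist (f u) (f v) ^ p) :
    ∀ n : ℕ, 1 ≤ n → ∀ f : V → Y,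
      ∑ u, ∑ v, ν u * kpow μ n u v * dist (f u) (f v) ^ p ≤
        (2 * cbar) ^ p * ∑ u, ∑ v, ν u * μ u v * dist (f u) (f v) ^ p := by
  have hp0 : (0:ℝ) ≤ p := le_trans zero_le_one hp
  -- stationarity of ν under μ
  have hstat : ∀ v, ∑ u, ν u * μ u v = ν v := by
    intro v
    calc ∑ u, ν u * μ u v = ∑ u, ν v * μ v u :=
          Finset.sum_congr rfl fun u _ => hrev u v
      _ = ν v * ∑ u, μ v u := by rw [Finset.mul_sum]
      _ = ν v := by rw [hrow, mul_one]
  -- kpow is nonnegative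
  have hk_nonneg : ∀ n (u v : V), 0 ≤ kpow μ n u v := by
    intro n
    induction n with
    | zero => intro u v; simp only [kpow]; split <;> norm_num
    | succ n ih =>
        intro u v
        exact Finset.sum_nonneg fun w _ => mul_nonneg (ih u w) (hμ w v)
  -- kpow has row sums 1
  have hkrow : ∀ n (u : V), ∑ v, kpow μ n u v = 1 := by
    intro n
    induction n with
    | zero => intro u; simp [kpow]
    | succ n ih =>
        intro u
        calc ∑ v, ∑ w, kpow μ n u w * μ w v
            = ∑ w, ∑ v, kpow μ n u w * μ w v := Finset.sum_comm
          _ = ∑ w, kpow μ n u w * ∑ v, μ w v := by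
              exact Finset.sum_congr rfl fun w _ => (Finset.mul_sum _ _ _).symm
          _ = 1 := by simp [hrow, ih u]
  -- stationarity of ν under kpow
  have hkstat : ∀ n (v : V), ∑ u, ν u * kpow μ n u v = ν v := by
    intro n
    induction n with
    | zero => intro v; simp [kpow, mul_ite]
    | succ n ih =>
        intro v
        calc ∑ u, ν u * ∑ w, kpow μ n u w * μ w v
            = ∑ u, ∑ w, ν u * kpow μ n u w * μ w v := by
              refine Finset.sum_congr rfl fun u _ => ?_
              rw [Finset.mul_sum]; exact Finset.sum_congr rfl fun w _ => (mul_assoc _ _ _).symm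
          _ = ∑ w, ∑ u, ν u * kpow μ n u w * μ w v := Finset.sum_comm
          _ = ∑ w, (∑ u, ν u * kpow μ n u w) * μ w v := by
              exact Finset.sum_congr rfl fun w _ => (Finset.sum_mul _ _ _).symm
          _ = ∑ w, ν w * μ w v := by
              exact Finset.sum_congr rfl fun w _ => by rw [ih w]
          _ = ν v := hstat v
  intro n _ f
  set d : V → V → ℝ := fun u v => dist (f u) (f v) ^ p with hd
  have hd0 : ∀ u v, 0 ≤ d u v := fun u v => Real.rpow_nonneg dist_nonneg p
  set D : ℝ := ∑ u, ∑ v, ν u * ν v * d u v with hDdef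
  -- expand with the third variable w
  have step1 : ∑ u, ∑ v, ν u * kpow μ n u v * d u v
      = ∑ u, ∑ v, ∑ w, ν u * kpow μ n u v * ν w * d u v := by
    refine Finset.sum_congr rfl fun u _ => Finset.sum_congr rfl fun v _ => ?_
    rw [show ∑ w, ν u * kpow μ n u v * ν w * d u v
        = (ν u * kpow μ n u v * d u v) * ∑ w, ν w by
      rw [Finset.mul_sum]; exact Finset.sum_congr rfl fun w _ => by ring]
    rw [hν1, mul_one]
  -- pointwise bound
  have step2 : ∑ u, ∑ v, ∑ w, ν u * kpow μ n u v * ν w * d u v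
      ≤ 2 ^ (p - 1) *
        ((∑ u, ∑ v, ∑ w, ν u * kpow μ n u v * ν w * d u w) +
         (∑ u, ∑ v, ∑ w, ν u * kpow μ n u v * ν w * d w v)) := by
    have : ∀ u v w : V, ν u * kpow μ n u v * ν w * d u v
        ≤ 2 ^ (p - 1) * (ν u * kpow μ n u v * ν w * d u w
            + ν u * kpow μ n u v * ν w * d w v) := by
      intro u v w
      have hdle : d u v ≤ 2 ^ (p - 1) * (d u w + d w v) := by
        have h1 : dist (f u) (f v) ^ p ≤ (dist (f u) (f w) + dist (f w) (f v)) ^ p :=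
          Real.rpow_le_rpow dist_nonneg (dist_triangle _ _ _) hp0
        exact h1.trans (two_rpow_aux dist_nonneg dist_nonneg hp)
      have hcoef : 0 ≤ ν u * kpow μ n u v * ν w :=
        mul_nonneg (mul_nonneg (hν u) (hk_nonneg n u v)) (hν w)
      calc ν u * kpow μ n u v * ν w * d u v
          ≤ ν u * kpow μ n u v * ν w * (2 ^ (p - 1) * (d u w + d w v)) :=
            mul_le_mul_of_nonneg_left hdle hcoef
        _ = 2 ^ (p - 1) * (ν u * kpow μ n u v * ν w * d u w
              + ν u * kpow μ n u v * ν w * d w v) := by ring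
    calc ∑ u, ∑ v, ∑ w, ν u * kpow μ n u v * ν w * d u v
        ≤ ∑ u, ∑ v, ∑ w, 2 ^ (p - 1) * (ν u * kpow μ n u v * ν w * d u w
            + ν u * kpow μ n u v * ν w * d w v) := by
          refine Finset.sum_le_sum fun u _ => Finset.sum_le_sum fun v _ =>
            Finset.sum_le_sum fun w _ => this u v w
      _ = 2 ^ (p - 1) *
        ((∑ u, ∑ v, ∑ w, ν u * kpow μ n u v * ν w * d u w) +
         (∑ u, ∑ v, ∑ w, ν u * kpow μ n u v * ν w * d w v)) := by
          simp only [mul_add, Finset.mul_sum, Finset.sum_add_distrib]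
  -- first triple sum equals D
  have hA : ∑ u, ∑ v, ∑ w, ν u * kpow μ n u v * ν w * d u w = D := by
    calc ∑ u, ∑ v, ∑ w, ν u * kpow μ n u v * ν w * d u w
        = ∑ u, ∑ w, ∑ v, ν u * kpow μ n u v * ν w * d u w := by
          exact Finset.sum_congr rfl fun u _ => Finset.sum_comm
      _ = ∑ u, ∑ w, (∑ v, kpow μ n u v) * (ν u * ν w * d u w) := by
          refine Finset.sum_congr rfl fun u _ => Finset.sum_congr rfl fun w _ => ?_
          rw [Finset.sum_mul]; exact Finset.sum_congr rfl fun v _ => by ring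
      _ = D := by
          refine Finset.sum_congr rfl fun u _ => Finset.sum_congr rfl fun w _ => ?_
          rw [hkrow n u, one_mul]
  -- second triple sum equals D
  have hB : ∑ u, ∑ v, ∑ w, ν u * kpow μ n u v * ν w * d w v = D := by
    calc ∑ u, ∑ v, ∑ w, ν u * kpow μ n u v * ν w * d w v
        = ∑ v, ∑ w, ∑ u, ν u * kpow μ n u v * ν w * d w v := by
          rw [Finset.sum_comm]
          exact Finset.sum_congr rfl fun v _ => Finset.sum_comm
      _ = ∑ v, ∑ w, (∑ u, ν u * kpow μ n u v) * (ν w * d w v) := by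
          refine Finset.sum_congr rfl fun v _ => Finset.sum_congr rfl fun w _ => ?_
          rw [Finset.sum_mul]; exact Finset.sum_congr rfl fun u _ => by ring
      _ = ∑ v, ∑ w, ν v * (ν w * d w v) := by
          refine Finset.sum_congr rfl fun v _ => Finset.sum_congr rfl fun w _ => ?_
          rw [hkstat n v]
      _ = ∑ w, ∑ v, ν w * ν v * d w v := by
          rw [Finset.sum_comm]
          exact Finset.sum_congr rfl fun w _ => Finset.sum_congr rfl fun v _ => by ring
      _ = D := rfl
  have hmain : ∑ u, ∑ v, ν u * kpow μ n u v * d u v ≤ 2 ^ p * D := by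
    rw [step1]
    refine step2.trans ?_
    rw [hA, hB]
    have h2p : (2:ℝ) ^ (p - 1) * (D + D) = 2 ^ p * D := by
      have : (2:ℝ) ^ (p - 1) = 2 ^ p / 2 := by
        rw [Real.rpow_sub (by norm_num : (0:ℝ) < 2), Real.rpow_one]
      rw [this]; ring
    exact le_of_eq h2p
  have hfinal : (2:ℝ) ^ p * D ≤ (2 * cbar) ^ p *
      ∑ u, ∑ v, ν u * μ u v * d u v := by
    rw [Real.mul_rpow (by norm_num : (0:ℝ) ≤ 2) hc.le, mul_assoc]
    exact mul_le_mul_of_nonneg_left (hpoin f)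
      (Real.rpow_nonneg (by norm_num) p)
  exact hmain.trans hfinal
end

section
/- Let (X,d) be a metric space with Nagata dimension at most d with constant γ (γ > Nagata constant). Then for every k ∈ ℤ, X admits a 2^k-bounded (1/(100·γ·d²), 1/(d+1))-padded stochastic decomposition. -/
open Finset

open Classical in
/-- A `Δ`-bounded `(ε,δ)`-padded stochastic decomposition of a metric space `X`, modeled as a
finitely supported probability distribution over partitions (given by their cell maps). -/
def PaddedDecomp (X : Type*) [MetricSpace X] (Δ ε δ : ℝ) : Prop :=
  ∃ (n : ℕ) (w : Fin n → ℝ) (P : Fin n → X → Set X),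
    (∀ i, 0 ≤ w i) ∧ (∑ i, w i = 1) ∧
    (∀ i x, x ∈ P i x) ∧
    (∀ i x y, y ∈ P i x → P i y = P i x) ∧
    (∀ i x, EMetric.diam (P i x) ≤ ENNReal.ofReal Δ) ∧
    (∀ x : X, δ ≤ ∑ i, if Metric.closedBall x (ε * Δ) ⊆ P i x then w i else 0)

/-- `X` has Nagata dimension at most `d` with constant `γ`. -/
def HasNagataDim (X : Type*) [MetricSpace X] (d : ℕ) (γ : ℝ) : Prop :=
  ∀ s : ℝ, 0 < s → ∃ 𝒞 : Set (Set X),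
    (∀ C ∈ 𝒞, C.Nonempty) ∧ (⋃₀ 𝒞 = Set.univ) ∧
    (∀ C ∈ 𝒞, EMetric.diam C ≤ ENNReal.ofReal (γ * s)) ∧
    (∀ A : Set X, EMetric.diam A ≤ ENNReal.ofReal s →
      {C ∈ 𝒞 | (C ∩ A).Nonempty}.Finite ∧ {C ∈ 𝒞 | (C ∩ A).Nonempty}.ncard ≤ d + 1)

/-- Members of the cover `𝒞` at infimal distance at most `r` from `z`. -/
def nagN {X : Type*} [MetricSpace X] (𝒞 : Set (Set X)) (z : X) (r : ℝ) : Set (Set X) :=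
  {C | C ∈ 𝒞 ∧ Metric.infDist z C ≤ r}

lemma nagN_mono {X : Type*} [MetricSpace X] (𝒞 : Set (Set X)) (z : X) {r r' : ℝ}
    (h : r ≤ r') : nagN 𝒞 z r ⊆ nagN 𝒞 z r' := fun _ hC => ⟨hC.1, hC.2.trans h⟩

lemma nagN_shift {X : Type*} [MetricSpace X] (𝒞 : Set (Set X)) {z y : X} {r e : ℝ}
    (h : dist z y ≤ e) : nagN 𝒞 y r ⊆ nagN 𝒞 z (r + e) := by
  intro C hC
  refine ⟨hC.1, ?_⟩
  calc Metric.infDist z C ≤ Metric.infDist y C + dist z y :=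
        Metric.infDist_le_infDist_add_dist
    _ ≤ r + e := add_le_add hC.2 h

/-- Bounded Nagata dimension implies padded decomposability: if `X` has Nagata dimension at
most `d` with constant `< γ`, then for every `k ∈ ℤ`, `X` admits a `2^k`-bounded
`(1/(100·γ·d²), 1/(d+1))`-padded stochastic decomposition. -/
theorem stmt13 {X : Type*} [MetricSpace X] (d : ℕ) (hd : 1 ≤ d) (γ : ℝ) (hγ : 1 ≤ γ)
    (hN : ∃ γ' : ℝ, γ' < γ ∧ HasNagataDim X d γ') :
    ∀ k : ℤ, PaddedDecomp X ((2:ℝ) ^ k) (1 / (100 * γ * (d:ℝ) ^ 2)) (1 / ((d:ℝ) + 1)) := by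
  obtain ⟨γ', hγ'γ, hNag⟩ := hN
  intro k
  set Δ : ℝ := (2:ℝ) ^ k with hΔdef
  have hΔ : 0 < Δ := by positivity
  have hd1 : (1:ℝ) ≤ (d:ℝ) := by exact_mod_cast hd
  have hγ0 : 0 < γ := lt_of_lt_of_le one_pos hγ
  have hd0 : (0:ℝ) < (d:ℝ) := lt_of_lt_of_le one_pos hd1
  set t : ℝ := Δ / (100 * γ * (d:ℝ)^2) with htdef
  have ht : 0 < t := by positivity
  set s : ℝ := 4 * Δ / (5 * γ) with hsdef
  have hs : 0 < s := by positivity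
  have hΔt : Δ = 100*γ*(d:ℝ)^2*t := by rw [htdef]; field_simp
  have hγsΔ : γ * s = 4*Δ/5 := by rw [hsdef]; field_simp
  have h80 : s = 80 * (d:ℝ)^2 * t := by rw [hsdef, htdef]; field_simp; ring
  obtain ⟨𝒞, hmem, hcov, hdiam, hmult⟩ := hNag s hs
  -- the partitions
  refine ⟨d+1, fun _ => 1 / ((d:ℝ)+1),
    fun i x => {y | nagN 𝒞 y (4*t*(i:ℕ) + t) = nagN 𝒞 x (4*t*(i:ℕ) + t)},
    fun _ => by positivity, ?_, fun i x => rfl, ?_, ?_, ?_⟩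
  · -- weights sum to 1
    rw [Finset.sum_const, Finset.card_univ, Fintype.card_fin]
    rw [nsmul_eq_mul]; push_cast
    field_simp
  · -- partition property
    intro i x y hy
    have hy' : nagN 𝒞 y (4*t*(i:ℕ) + t) = nagN 𝒞 x (4*t*(i:ℕ) + t) := hy
    ext z
    simp only [Set.mem_setOf_eq, hy']
  · -- diameter bound
    intro i x
    apply EMetric.diam_le
    intro y hy z hz
    have hy' : nagN 𝒞 y (4*t*(i:ℕ) + t) = nagN 𝒞 x (4*t*(i:ℕ) + t) := hy
    have hz' : nagN 𝒞 z (4*t*(i:ℕ) + t) = nagN 𝒞 x (4*t*(i:ℕ) + t) := hz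
    -- a member containing x
    obtain ⟨C₀, hC₀, hxC₀⟩ : ∃ C₀ ∈ 𝒞, x ∈ C₀ := by
      have : x ∈ ⋃₀ 𝒞 := by rw [hcov]; trivial
      exact Set.mem_sUnion.mp this
    have hr0 : (0:ℝ) ≤ 4*t*(i:ℕ) + t := by positivity
    have hC₀N : C₀ ∈ nagN 𝒞 x (4*t*(i:ℕ) + t) :=
      ⟨hC₀, by rw [Metric.infDist_zero_of_mem hxC₀]; exact hr0⟩
    have hC₀ne : C₀.Nonempty := hmem C₀ hC₀
    have hyC : Metric.infDist y C₀ < 4*t*(i:ℕ) + t + t := by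
      have : C₀ ∈ nagN 𝒞 y (4*t*(i:ℕ) + t) := hy'.symm ▸ hC₀N
      linarith [this.2]
    have hzC : Metric.infDist z C₀ < 4*t*(i:ℕ) + t + t := by
      have : C₀ ∈ nagN 𝒞 z (4*t*(i:ℕ) + t) := hz'.symm ▸ hC₀N
      linarith [this.2]
    obtain ⟨cy, hcy, hcyd⟩ := (Metric.infDist_lt_iff hC₀ne).mp hyC
    obtain ⟨cz, hcz, hczd⟩ := (Metric.infDist_lt_iff hC₀ne).mp hzC
    have hdC₀ : EMetric.diam C₀ ≤ ENNReal.ofReal (γ * s) :=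
      (hdiam C₀ hC₀).trans (ENNReal.ofReal_le_ofReal
        (mul_le_mul_of_nonneg_right hγ'γ.le hs.le))
    have hi : ((i:ℕ):ℝ) ≤ (d:ℝ) := by exact_mod_cast i.is_le
    calc edist y z ≤ edist y cy + edist cy cz + edist cz z := edist_triangle4 y cy cz z
      _ ≤ ENNReal.ofReal (4*t*(i:ℕ) + t + t) + ENNReal.ofReal (γ * s)
          + ENNReal.ofReal (4*t*(i:ℕ) + t + t) := by
          gcongr
          · rw [edist_dist]; exact ENNReal.ofReal_le_ofReal hcyd.le
          · exact (EMetric.edist_le_diam_of_mem hcy hcz).trans hdC₀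
          · rw [edist_dist, dist_comm]; exact ENNReal.ofReal_le_ofReal hczd.le
      _ = ENNReal.ofReal ((4*t*(i:ℕ) + t + t) + γ * s + (4*t*(i:ℕ) + t + t)) := by
          rw [← ENNReal.ofReal_add, ← ENNReal.ofReal_add] <;> positivity
      _ ≤ ENNReal.ofReal Δ := by
          apply ENNReal.ofReal_le_ofReal
          rw [hγsΔ]
          nlinarith [mul_le_mul_of_nonneg_left hi (by positivity : (0:ℝ) ≤ 8*t),
            mul_nonneg (sub_nonneg.mpr hγ) (by positivity : (0:ℝ) ≤ 20*(d:ℝ)^2*t),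
            mul_nonneg (sub_nonneg.mpr hd1) (mul_nonneg hd0.le ht.le), ht.le]
  · -- padding
    intro x
    -- the nested sets S j := nagN 𝒞 x (4 t j)
    have hSfin : ∀ r : ℝ, 2*(r+t) ≤ s → (nagN 𝒞 x r).Finite ∧ (nagN 𝒞 x r).ncard ≤ d + 1 := by
      intro r hr
      set A : Set X := Metric.closedBall x (r + t) with hAdef
      have hAdiam : EMetric.diam A ≤ ENNReal.ofReal s := by
        apply EMetric.diam_le
        intro a ha b hb
        rw [edist_dist]
        apply ENNReal.ofReal_le_ofReal
        have ha' : dist a x ≤ r + t := Metric.mem_closedBall.mp ha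
        have hb' : dist b x ≤ r + t := Metric.mem_closedBall.mp hb
        calc dist a b ≤ dist a x + dist x b := dist_triangle a x b
          _ = dist a x + dist b x := by rw [dist_comm x b]
          _ ≤ s := by linarith
      obtain ⟨hfin, hcard⟩ := hmult A hAdiam
      have hsub : nagN 𝒞 x r ⊆ {C ∈ 𝒞 | (C ∩ A).Nonempty} := by
        intro C hC
        refine ⟨hC.1, ?_⟩
        have : Metric.infDist x C < r + t := lt_of_le_of_lt hC.2 (by linarith)
        obtain ⟨c, hcC, hcd⟩ := (Metric.infDist_lt_iff (hmem C hC.1)).mp this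
        exact ⟨c, hcC, by rw [Metric.mem_closedBall, dist_comm]; exact hcd.le⟩
      exact ⟨hfin.subset hsub, le_trans (Set.ncard_le_ncard hsub hfin) hcard⟩
    have hscale : ∀ j : ℕ, j ≤ d + 1 → 2*(4*t*(j:ℝ)+t) ≤ s := by
      intro j hj
      have hj' : (j:ℝ) ≤ (d:ℝ) + 1 := by exact_mod_cast hj
      rw [h80]
      nlinarith [mul_le_mul_of_nonneg_left hj' (by positivity : (0:ℝ) ≤ 8*t), ht.le,
        mul_nonneg (sub_nonneg.mpr hd1) (mul_nonneg hd0.le ht.le)]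
    -- pigeonhole: some level stabilizes
    have hpig : ∃ i₀ : ℕ, i₀ ≤ d ∧ nagN 𝒞 x (4*t*(i₀:ℝ)) = nagN 𝒞 x (4*t*((i₀:ℝ)+1)) := by
      by_contra hcon
      push_neg at hcon
      have hS0 : (nagN 𝒞 x (4*t*((0:ℕ):ℝ))).Nonempty := by
        obtain ⟨C₀, hC₀, hxC₀⟩ : ∃ C₀ ∈ 𝒞, x ∈ C₀ := by
          have : x ∈ ⋃₀ 𝒞 := by rw [hcov]; trivial
          exact Set.mem_sUnion.mp this
        exact ⟨C₀, hC₀, by rw [Metric.infDist_zero_of_mem hxC₀]; positivity⟩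
      have hfin : ∀ j : ℕ, j ≤ d + 1 → (nagN 𝒞 x (4*t*(j:ℝ))).Finite := by
        intro j hj
        exact (hSfin _ (by linarith [hscale j hj, ht])).1
      have grow : ∀ j : ℕ, j ≤ d + 1 → j + 1 ≤ (nagN 𝒞 x (4*t*(j:ℝ))).ncard := by
        intro j
        induction j with
        | zero =>
          intro _
          have := (Set.ncard_pos (hfin 0 (by omega))).mpr hS0
          omega
        | succ j ih =>
          intro hj
          have h1 : j + 1 ≤ (nagN 𝒞 x (4*t*(j:ℝ))).ncard := ih (by omega)
          have hssub : nagN 𝒞 x (4*t*(j:ℝ)) ⊂ nagN 𝒞 x (4*t*((j:ℕ)+1:ℝ)) := by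
            refine HasSubset.Subset.ssubset_of_ne (nagN_mono _ _ ?_) (hcon j (by omega))
            nlinarith [ht.le]
          have h2 := Set.ncard_lt_ncard hssub (by
            have := hfin (j+1) hj
            convert this using 3
            push_cast
            ring)
          have h3 : (nagN 𝒞 x (4*t*((j:ℕ)+1:ℝ))).ncard = (nagN 𝒞 x (4*t*(((j+1:ℕ)):ℝ))).ncard := by
            congr 2
            push_cast
            ring
          omega
      have hbig := grow (d+1) le_rfl
      have hle := (hSfin (4*t*((d+1:ℕ):ℝ)) (hscale (d+1) le_rfl)).2
      omega
    obtain ⟨i₀, hi₀d, hstab⟩ := hpig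
    -- the padded index
    set iF : Fin (d+1) := ⟨i₀, by omega⟩ with hiF
    have hεt : 1 / (100 * γ * (d:ℝ) ^ 2) * Δ = t := by
      rw [htdef]; field_simp
    have hball : Metric.closedBall x (1 / (100 * γ * (d:ℝ) ^ 2) * Δ) ⊆
        {y | nagN 𝒞 y (4*t*((iF:ℕ):ℝ) + t) = nagN 𝒞 x (4*t*((iF:ℕ):ℝ) + t)} := by
      rw [hεt]
      intro y hy
      have hdy : dist y x ≤ t := Metric.mem_closedBall.mp hy
      have hdx : dist x y ≤ t := by rw [dist_comm]; exact hdy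
      have hiFi : ((iF:ℕ):ℝ) = (i₀:ℝ) := by rw [hiF]
      rw [hiFi]
      -- key: nagN 𝒞 x (4t i₀ + t) ⊆ nagN 𝒞 x (4t i₀)
      have hkey : nagN 𝒞 x (4*t*(i₀:ℝ) + t) ⊆ nagN 𝒞 x (4*t*(i₀:ℝ)) := by
        rw [hstab]
        apply nagN_mono
        nlinarith [ht.le]
      apply Set.Subset.antisymm
      · intro C hC
        have : C ∈ nagN 𝒞 x (4*t*(i₀:ℝ) + t + t) := nagN_shift 𝒞 hdx hC
        have : C ∈ nagN 𝒞 x (4*t*((i₀:ℝ)+1)) := by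
          refine nagN_mono _ _ ?_ this
          nlinarith [ht.le]
        rw [← hstab] at this
        exact nagN_mono _ _ (by linarith [ht.le]) this
      · intro C hC
        have hC' : C ∈ nagN 𝒞 x (4*t*(i₀:ℝ)) := hkey hC
        have : C ∈ nagN 𝒞 y (4*t*(i₀:ℝ) + t) := nagN_shift 𝒞 hdy hC'
        exact this
    refine le_trans ?_ (Finset.single_le_sum (fun i _ => ?_) (Finset.mem_univ iF))
    · rw [if_pos hball]
    · split
      · positivity
      · exact le_rfl
end

section
/- Let P be a partition of a metric space X into cells of diameter at most 2^j, and let x, y ∈ X. Denote by P(x) the cell containing x and set h_P(z) = min{dist(z, X∖P(z)), 2^j}. Then for any signs σ_C ∈ {−1,+1} assigned to the cells, |σ_{P(x)}·h_P(x) − σ_{P(y)}·h_P(y)| ≤ 2·min{d(x,y), 2^j}. -/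
/-- The truncated distance to the complement of one's own cell:
`h_P(z) = min{dist(z, X ∖ P(z)), 2^j}` (interpreted as `2^j` when the complement is empty). -/
noncomputable def padFn {X : Type*} [MetricSpace X] (P : X → Set X) (j : ℤ) (z : X) : ℝ :=
  (min (EMetric.infEdist z (P z)ᶜ) (ENNReal.ofReal ((2:ℝ) ^ j))).toReal

lemma padFn_nonneg {X : Type*} [MetricSpace X] (P : X → Set X) (j : ℤ) (z : X) :
    0 ≤ padFn P j z := ENNReal.toReal_nonneg

lemma padFn_le_pow {X : Type*} [MetricSpace X] (P : X → Set X) (j : ℤ) (z : X) :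
    padFn P j z ≤ (2:ℝ) ^ j := by
  have h : (min (EMetric.infEdist z (P z)ᶜ) (ENNReal.ofReal ((2:ℝ) ^ j))).toReal
      ≤ (ENNReal.ofReal ((2:ℝ) ^ j)).toReal :=
    ENNReal.toReal_mono ENNReal.ofReal_ne_top (min_le_right _ _)
  rwa [ENNReal.toReal_ofReal (by positivity)] at h

lemma padFn_le_dist {X : Type*} [MetricSpace X] (P : X → Set X) (j : ℤ) (z w : X)
    (hw : w ∉ P z) : padFn P j z ≤ dist z w := by
  have h1 : min (EMetric.infEdist z (P z)ᶜ) (ENNReal.ofReal ((2:ℝ) ^ j)) ≤ edist z w :=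
    le_trans (min_le_left _ _) (EMetric.infEdist_le_edist_of_mem hw)
  have := ENNReal.toReal_mono (edist_ne_top z w) h1
  rw [dist_edist]; exact this

/-- For a partition `P` of `X` into cells of diameter at most `2^j` and any signs `σ_C ∈ {±1}`
on cells, `|σ_{P(x)}·h_P(x) − σ_{P(y)}·h_P(y)| ≤ 2·min{d(x,y), 2^j}`. -/
theorem stmt14 {X : Type*} [MetricSpace X] (j : ℤ) (P : X → Set X)
    (hmem : ∀ x, x ∈ P x) (hpart : ∀ x y, y ∈ P x → P y = P x)
    (hdiam : ∀ x, EMetric.diam (P x) ≤ ENNReal.ofReal ((2:ℝ) ^ j))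
    (σ : Set X → ℝ) (hσ : ∀ C : Set X, σ C = 1 ∨ σ C = -1)
    (x y : X) :
    |σ (P x) * padFn P j x - σ (P y) * padFn P j y| ≤
      2 * min (dist x y) ((2:ℝ) ^ j) := by
  have hpos : (0:ℝ) < (2:ℝ) ^ j := by positivity
  have hx0 := padFn_nonneg P j x
  have hy0 := padFn_nonneg P j y
  have hσx : |σ (P x)| = 1 := by rcases hσ (P x) with h | h <;> simp [h]
  have hσy : |σ (P y)| = 1 := by rcases hσ (P y) with h | h <;> simp [h]
  -- generic bound: |σx hx - σy hy| ≤ hx + hy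
  have hsum : |σ (P x) * padFn P j x - σ (P y) * padFn P j y|
      ≤ padFn P j x + padFn P j y := by
    calc |σ (P x) * padFn P j x - σ (P y) * padFn P j y|
        ≤ |σ (P x) * padFn P j x| + |σ (P y) * padFn P j y| := abs_sub _ _
      _ = padFn P j x + padFn P j y := by
          rw [abs_mul, abs_mul, hσx, hσy, one_mul, one_mul,
            abs_of_nonneg hx0, abs_of_nonneg hy0]
  rcases le_total ((2:ℝ) ^ j) (dist x y) with hle | hle
  · rw [min_eq_right hle]
    calc |σ (P x) * padFn P j x - σ (P y) * padFn P j y|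
        ≤ padFn P j x + padFn P j y := hsum
      _ ≤ (2:ℝ) ^ j + (2:ℝ) ^ j := add_le_add (padFn_le_pow P j x) (padFn_le_pow P j y)
      _ = 2 * (2:ℝ) ^ j := by ring
  · rw [min_eq_left hle]
    by_cases hPxy : P x = P y
    · -- same cell: signs equal, use 1-Lipschitz of truncated infEdist
      have hσeq : σ (P x) = σ (P y) := by rw [hPxy]
      have hlip : |padFn P j x - padFn P j y| ≤ dist x y := by
        unfold padFn
        rw [hPxy]
        by_cases hne : ((P y)ᶜ : Set X).Nonempty
        · obtain ⟨w, hw⟩ := hne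
          have hfx : EMetric.infEdist x (P y)ᶜ ≠ ⊤ :=
            ne_top_of_le_ne_top (edist_ne_top x w) (EMetric.infEdist_le_edist_of_mem hw)
          have hfy : EMetric.infEdist y (P y)ᶜ ≠ ⊤ :=
            ne_top_of_le_ne_top (edist_ne_top y w) (EMetric.infEdist_le_edist_of_mem hw)
          rw [ENNReal.toReal_min hfx ENNReal.ofReal_ne_top,
            ENNReal.toReal_min hfy ENNReal.ofReal_ne_top]
          refine le_trans (abs_min_sub_min_le_max _ _ _ _) ?_
          rw [sub_self, abs_zero]
          refine max_le ?_ (dist_nonneg)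
          have h1 : EMetric.infEdist x (P y)ᶜ ≤ EMetric.infEdist y (P y)ᶜ + edist x y :=
            EMetric.infEdist_le_infEdist_add_edist
          have h2 : EMetric.infEdist y (P y)ᶜ ≤ EMetric.infEdist x (P y)ᶜ + edist y x :=
            EMetric.infEdist_le_infEdist_add_edist
          have e1 := ENNReal.toReal_mono
            (by simp [ENNReal.add_ne_top, hfy, edist_ne_top]) h1
          have e2 := ENNReal.toReal_mono
            (by simp [ENNReal.add_ne_top, hfx, edist_ne_top]) h2
          rw [ENNReal.toReal_add hfy (edist_ne_top x y), ← dist_edist] at e1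
          rw [ENNReal.toReal_add hfx (edist_ne_top y x), ← dist_edist] at e2
          rw [abs_sub_le_iff]
          constructor <;> [linarith; (rw [dist_comm] at e2; linarith)]
        · rw [Set.not_nonempty_iff_eq_empty] at hne
          simp [hne, EMetric.infEdist, Metric.infEDist_empty]
      calc |σ (P x) * padFn P j x - σ (P y) * padFn P j y|
          = |σ (P x)| * |padFn P j x - padFn P j y| := by
            rw [hσeq, ← abs_mul, mul_sub]
        _ ≤ dist x y := by rw [hσx, one_mul]; exact hlip
        _ ≤ 2 * dist x y := by linarith [dist_nonneg (x := x) (y := y)]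
    · -- different cells: both padFn bounded by dist
      have hyx : y ∉ P x := fun h => hPxy ((hpart x y h).symm)
      have hxy : x ∉ P y := fun h => hPxy (hpart y x h)
      have h1 := padFn_le_dist P j x y hyx
      have h2 := padFn_le_dist P j y x hxy
      rw [dist_comm] at h2
      linarith [hsum]
end

section
/- Let (V,μ,ν) be a finite reversible ergodic Markov chain, Y a complete CAT(0) space, and for each y ∈ Y let T_yY denote the tangent cone at y with the 1-Lipschitz logarithm map π_y: Y → T_yY (which preserves distances to y and maps the 2-center of mass of a measure σ with c₂(σ)=y to the cone point). If for every y ∈ Y and every f: V → T_yY one has ∑_{u,v}ν(u)ν(v)·d̃(f(u),f(v))² ≤ Λ²·∑_{u,v}ν(u)μ(u→v)·d̃(f(u),f(v))², then for every f: V → Y one has ∑_{u,v}ν(u)ν(v)·d(f(u),f(v))² ≤ (2Λ)²·∑_{u,v}ν(u)μ(u→v)·d(f(u),f(v))². -/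
open Set

lemma exists_cm {Y : Type*} [MetricSpace Y] [CompleteSpace Y] [Nonempty Y]
    (hgeo : GeodesicSpace Y) (hCAT : PUnifConvex Y 2 1)
    {V : Type*} [Fintype V] (ν : V → ℝ)
    (hν : ∀ u, 0 ≤ ν u) (hν1 : ∑ u, ν u = 1) (f : V → Y) :
    ∃ y : Y, ∀ z : Y, ∑ u, ν u * dist (f u) y ^ 2 ≤ ∑ u, ν u * dist (f u) z ^ 2 := by
  set F : Y → ℝ := fun z => ∑ u, ν u * dist (f u) z ^ 2 with hFdef
  have hF0 : ∀ z, (0:ℝ) ≤ F z := fun z =>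
    Finset.sum_nonneg fun u _ => mul_nonneg (hν u) (by positivity)
  have hbdd : BddBelow (Set.range F) := ⟨0, by rintro _ ⟨z, rfl⟩; exact hF0 z⟩
  set m : ℝ := ⨅ z, F z with hm
  have hmle : ∀ z, m ≤ F z := fun z => ciInf_le hbdd z
  -- midpoint inequality
  have hmid : ∀ a b : Y, dist a b ^ 2 ≤ 2 * F a + 2 * F b - 4 * m := by
    intro a b
    obtain ⟨γ, hγ⟩ := hgeo a b
    have key : F (γ (1/2)) ≤ (1/2) * F a + (1/2) * F b - (1/4) * dist a b ^ 2 := by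
      have h : ∀ u : V, ν u * dist (f u) (γ (1/2)) ^ 2 ≤
          (1/2) * (ν u * dist (f u) a ^ 2) + (1/2) * (ν u * dist (f u) b ^ 2)
            - (dist a b ^ 2 / 4) * ν u := by
        intro u
        have h2 := hCAT (f u) a b γ hγ (1/2) ⟨by norm_num, by norm_num⟩
        have e : ∀ x : ℝ, 0 ≤ x → x ^ (2:ℝ) = x ^ (2:ℕ) := by
          intro x hx
          rw [show (2:ℝ) = ((2:ℕ):ℝ) by norm_num, Real.rpow_natCast]
        rw [e _ dist_nonneg, e _ dist_nonneg, e _ dist_nonneg, e _ dist_nonneg] at h2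
        nlinarith [hν u, mul_le_mul_of_nonneg_left h2 (hν u)]
      calc F (γ (1/2)) ≤ ∑ u, ((1/2) * (ν u * dist (f u) a ^ 2)
            + (1/2) * (ν u * dist (f u) b ^ 2) - (dist a b ^ 2 / 4) * ν u) :=
          Finset.sum_le_sum fun u _ => h u
        _ = (1/2) * F a + (1/2) * F b - (1/4) * dist a b ^ 2 := by
          rw [Finset.sum_sub_distrib, Finset.sum_add_distrib, ← Finset.mul_sum,
            ← Finset.mul_sum, ← Finset.mul_sum, hν1]
          ring
    have := hmle (γ (1/2))
    linarith
  -- minimizing sequence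
  have hseq : ∀ n : ℕ, ∃ z : Y, F z < m + 1 / (n + 1) := by
    intro n
    apply exists_lt_of_ciInf_lt
    rw [← hm]
    have : (0:ℝ) < 1 / (n + 1) := by positivity
    linarith
  choose z hz using hseq
  have hcauchy : CauchySeq z := by
    apply cauchySeq_of_le_tendsto_0 (fun N : ℕ => Real.sqrt (4 / (N + 1)))
    · intro n k N hn hk
      have h1 : (1:ℝ) / (n + 1) ≤ 1 / (N + 1) := by
        gcongr
      have h2 : (1:ℝ) / (k + 1) ≤ 1 / (N + 1) := by
        gcongr
      have hd : dist (z n) (z k) ^ 2 ≤ 4 / (N + 1) := by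
        have := hmid (z n) (z k)
        have h3 := hz n
        have h4 := hz k
        rw [div_eq_mul_one_div]
        linarith
      exact (Real.le_sqrt dist_nonneg (by positivity)).mpr hd
    · have h1 : Filter.Tendsto (fun N : ℕ => (4:ℝ) / (N + 1)) Filter.atTop (nhds 0) := by
        have := tendsto_one_div_add_atTop_nhds_zero_nat.const_mul (4:ℝ)
        simpa [div_eq_mul_inv] using this
      have h2 := (Real.continuous_sqrt.tendsto 0).comp h1
      have : Filter.Tendsto (fun N : ℕ => Real.sqrt (4 / (N + 1))) Filter.atTop
          (nhds (Real.sqrt 0)) := h2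
      simpa using this
  obtain ⟨y, hy⟩ := cauchySeq_tendsto_of_complete hcauchy
  have hFcont : Continuous F := by
    apply continuous_finset_sum
    intro u _
    exact continuous_const.mul ((continuous_const.dist continuous_id).pow 2)
  have hFy : F y = m := by
    have hlim : Filter.Tendsto (fun n => F (z n)) Filter.atTop (nhds (F y)) :=
      (hFcont.tendsto y).comp hy
    have hlim2 : Filter.Tendsto (fun n => F (z n)) Filter.atTop (nhds m) := by
      apply tendsto_of_tendsto_of_tendsto_of_le_of_le (g := fun _ => m)
        (h := fun n : ℕ => m + 1 / (n + 1)) tendsto_const_nhds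
      · simpa using (tendsto_const_nhds : Filter.Tendsto (fun _ : ℕ => m) Filter.atTop (nhds m)).add tendsto_one_div_add_atTop_nhds_zero_nat
      · exact fun n => hmle (z n)
      · exact fun n => (hz n).le
    exact tendsto_nhds_unique hlim hlim2
  exact ⟨y, fun w => by rw [show ∑ u, ν u * dist (f u) y ^ 2 = F y from rfl, hFy]; exact hmle w⟩

/-- Wang's trick: transferring a Poincaré inequality from all tangent cones of a complete
CAT(0) space `Y` to `Y` itself, at the cost of a factor `2`. The tangent cones are abstracted
as metric spaces `T y` with `1`-Lipschitz logarithm maps `π y : Y → T y` preserving distances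
to `y` and mapping centers of mass to the cone point. -/
theorem stmt15 {Y : Type*} [MetricSpace Y] [CompleteSpace Y]
    (hgeo : GeodesicSpace Y) (hCAT : PUnifConvex Y 2 1)
    (T : Y → Type*) (instT : ∀ y, MetricSpace (T y)) (π : ∀ y : Y, Y → T y)
    (hLip : ∀ y : Y, LipschitzWith 1 (π y))
    (hdist : ∀ y z : Y, dist (π y y) (π y z) = dist y z)
    {V : Type*} [Fintype V] (ν : V → ℝ) (μ : V → V → ℝ)
    (hν : ∀ u, 0 ≤ ν u) (hν1 : ∑ u, ν u = 1)
    (hμ : ∀ u v, 0 ≤ μ u v) (hrow : ∀ u, ∑ v, μ u v = 1)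
    (hrev : ∀ u v, ν u * μ u v = ν v * μ v u)
    (hcm : ∀ (y : Y) (g : V → Y),
      (∀ z : Y, ∑ u, ν u * dist (g u) y ^ 2 ≤ ∑ u, ν u * dist (g u) z ^ 2) →
      ∀ w : T y, ∑ u, ν u * dist (π y (g u)) (π y y) ^ 2 ≤
        ∑ u, ν u * dist (π y (g u)) w ^ 2)
    (Λ : ℝ) (hΛ : 0 ≤ Λ)
    (hpoin : ∀ (y : Y) (g : V → T y),
      ∑ u, ∑ v, ν u * ν v * dist (g u) (g v) ^ 2 ≤
        Λ ^ 2 * ∑ u, ∑ v, ν u * μ u v * dist (g u) (g v) ^ 2) :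
    ∀ f : V → Y,
      ∑ u, ∑ v, ν u * ν v * dist (f u) (f v) ^ 2 ≤
        (2 * Λ) ^ 2 * ∑ u, ∑ v, ν u * μ u v * dist (f u) (f v) ^ 2 := by
  intro f
  rcases isEmpty_or_nonempty V with hV | hV
  · simp [Finset.univ_eq_empty] at hν1
  haveI : Nonempty Y := ⟨f (Classical.arbitrary V)⟩
  obtain ⟨y, hy⟩ := exists_cm hgeo hCAT ν hν hν1 f
  set g : V → T y := fun u => π y (f u) with hg
  set A : ℝ := ∑ u, ν u * dist (f u) y ^ 2 with hA
  -- Step 1: LHS ≤ 4 A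
  have step1 : ∑ u, ∑ v, ν u * ν v * dist (f u) (f v) ^ 2 ≤ 4 * A := by
    have h1 : ∑ u, ∑ v, ν u * ν v * dist (f u) (f v) ^ 2 ≤
        ∑ u, ∑ v, ν u * ν v * (2 * dist (f u) y ^ 2 + 2 * dist (f v) y ^ 2) := by
      apply Finset.sum_le_sum; intro u _
      apply Finset.sum_le_sum; intro v _
      apply mul_le_mul_of_nonneg_left _ (mul_nonneg (hν u) (hν v))
      have htri : dist (f u) (f v) ≤ dist (f u) y + dist (f v) y := by
        rw [dist_comm (f v) y]; exact dist_triangle _ _ _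
      nlinarith [htri, sq_nonneg (dist (f u) y - dist (f v) y),
        dist_nonneg (x := f u) (y := f v), dist_nonneg (x := f u) (y := y),
        dist_nonneg (x := f v) (y := y),
        mul_self_nonneg (dist (f u) y + dist (f v) y),
        sq_nonneg (dist (f u) (f v) + dist (f u) y + dist (f v) y)]
    have h2 : ∑ u, ∑ v, ν u * ν v * (2 * dist (f u) y ^ 2 + 2 * dist (f v) y ^ 2)
        = 4 * A := by
      have e1 : ∀ u : V, ∑ v, ν u * ν v * (2 * dist (f u) y ^ 2 + 2 * dist (f v) y ^ 2)
          = 2 * (ν u * dist (f u) y ^ 2) + 2 * (ν u * A) := by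
        intro u
        have : ∀ v : V, ν u * ν v * (2 * dist (f u) y ^ 2 + 2 * dist (f v) y ^ 2)
            = (2 * (ν u * dist (f u) y ^ 2)) * ν v
              + (2 * ν u) * (ν v * dist (f v) y ^ 2) := fun v => by ring
        rw [Finset.sum_congr rfl fun v _ => this v, Finset.sum_add_distrib,
          ← Finset.mul_sum, ← Finset.mul_sum, hν1, hA]
        ring
      rw [Finset.sum_congr rfl fun u _ => e1 u, Finset.sum_add_distrib,
        ← Finset.mul_sum, ← Finset.mul_sum, hA]
      have : ∑ u, ν u * A = A := by rw [← Finset.sum_mul, hν1, one_mul]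
      rw [← hA, this]; ring
    linarith
  -- Step 2: A equals the variance in the tangent cone
  have step2 : A = ∑ u, ν u * dist (g u) (π y y) ^ 2 := by
    apply Finset.sum_congr rfl
    intro u _
    rw [hg, dist_comm (π y (f u)) (π y y), hdist, dist_comm y (f u)]
  -- Step 3: variance ≤ double sum in the tangent cone
  have step3 : ∑ u, ν u * dist (g u) (π y y) ^ 2 ≤
      ∑ u, ∑ v, ν u * ν v * dist (g u) (g v) ^ 2 := by
    have hmin := hcm y f hy
    calc ∑ u, ν u * dist (g u) (π y y) ^ 2
        = ∑ v, ν v * (∑ u, ν u * dist (g u) (π y y) ^ 2) := by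
          rw [← Finset.sum_mul, hν1, one_mul]
      _ ≤ ∑ v, ν v * (∑ u, ν u * dist (g u) (g v) ^ 2) := by
          apply Finset.sum_le_sum; intro v _
          exact mul_le_mul_of_nonneg_left (hmin (g v)) (hν v)
      _ = ∑ u, ∑ v, ν u * ν v * dist (g u) (g v) ^ 2 := by
          rw [Finset.sum_comm]
          apply Finset.sum_congr rfl; intro u _
          rw [Finset.mul_sum]
          apply Finset.sum_congr rfl; intro v _
          ring
  -- Step 4: the Poincaré inequality in the tangent cone
  have step4 := hpoin y g
  -- Step 5: π y is 1-Lipschitz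
  have step5 : ∑ u, ∑ v, ν u * μ u v * dist (g u) (g v) ^ 2 ≤
      ∑ u, ∑ v, ν u * μ u v * dist (f u) (f v) ^ 2 := by
    apply Finset.sum_le_sum; intro u _
    apply Finset.sum_le_sum; intro v _
    apply mul_le_mul_of_nonneg_left _ (mul_nonneg (hν u) (hμ u v))
    have hl : dist (g u) (g v) ≤ dist (f u) (f v) := by
      have := (hLip y).dist_le_mul (f u) (f v)
      simpa using this
    exact pow_le_pow_left₀ dist_nonneg hl 2
  have hΛ2 : (0:ℝ) ≤ Λ ^ 2 := sq_nonneg Λ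
  calc ∑ u, ∑ v, ν u * ν v * dist (f u) (f v) ^ 2
      ≤ 4 * A := step1
    _ = 4 * ∑ u, ν u * dist (g u) (π y y) ^ 2 := by rw [step2]
    _ ≤ 4 * ∑ u, ∑ v, ν u * ν v * dist (g u) (g v) ^ 2 := by linarith
    _ ≤ 4 * (Λ ^ 2 * ∑ u, ∑ v, ν u * μ u v * dist (g u) (g v) ^ 2) := by linarith
    _ ≤ 4 * (Λ ^ 2 * ∑ u, ∑ v, ν u * μ u v * dist (f u) (f v) ^ 2) := by
        have := mul_le_mul_of_nonneg_left step5 hΛ2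
        linarith
    _ = (2 * Λ) ^ 2 * ∑ u, ∑ v, ν u * μ u v * dist (f u) (f v) ^ 2 := by ring
end
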